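/- arXiv:1802.10012 — 3 statements merged into one kernel-verified Lean document; each statement's English description precedes it below -/
import Mathlib

section
/- Let a be a non-zero squarefree integer, K = Q(√a), and suppose the narrow class group of K is trivial. Let N be a positive integer all of whose prime factors are non-inert (i.e., split or ramified) in O_K. Then there exist integers x, y with N_K(x, y) = N, where N_K(x, y) = x² − xy + ((1−a)/4)y² if a ≡ 1 (mod 4) and N_K(x, y) = x² − a y² otherwise. -/
open scoped nonZeroDivisors

lemma zmod_key1 : ∀ s t : ZMod 4, s^2 = t^2 →
    (ZMod.castHom (show 2 ∣ 4 by norm_num) (ZMod 2)) (s+t) = 0 := by decide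
lemma zmod_key2 : ∀ s t : ZMod 4, (s^2 = 2*t^2 ∨ s^2 = 3*t^2) →
    (ZMod.castHom (show 2 ∣ 4 by norm_num) (ZMod 2)) s = 0 ∧
    (ZMod.castHom (show 2 ∣ 4 by norm_num) (ZMod 2)) t = 0 := by decide

lemma rat_int_of_sq (a : ℤ) (ha : Squarefree a) (t : ℚ) (m : ℤ) (h : (a:ℚ) * t^2 = (m:ℚ)) :
    ∃ u : ℤ, (u:ℚ) = t := by
  have hden : (t.den : ℚ) ≠ 0 := by exact_mod_cast t.den_nz
  have hnum : (t.num : ℚ) = t * t.den := by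
    rw [eq_comm, ← eq_div_iff hden]; exact (Rat.num_div_den t).symm
  have key : a * t.num ^ 2 = m * (t.den:ℤ)^2 := by
    have : (a:ℚ) * (t.num:ℚ)^2 = (m:ℚ) * (t.den:ℚ)^2 := by
      rw [hnum]; nlinarith [h]
    exact_mod_cast this
  have hdvd : (t.den:ℤ)^2 ∣ a * t.num^2 := ⟨m, by linarith [key]⟩
  have hcop : IsCoprime (t.den:ℤ) t.num := by
    rw [Int.isCoprime_iff_gcd_eq_one, Int.gcd_comm]
    exact t.reduced
  have : (t.den:ℤ)^2 ∣ a := (hcop.pow).dvd_of_dvd_mul_right (by rwa [mul_comm] at hdvd)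
  have hu : IsUnit (t.den:ℤ) := ha _ (by rwa [← sq])
  have hd1 : (t.den:ℤ) = 1 := by
    rcases Int.isUnit_iff.mp hu with h1 | h1
    · exact h1
    · exfalso; have := t.pos; omega
  have : (t.den:ℚ) = 1 := by exact_mod_cast hd1
  refine ⟨t.num, ?_⟩
  rw [hnum, this, mul_one]

open NumberField in
lemma quad_repr (a : ℤ) (ha0 : a ≠ 0) (ha1 : a ≠ 1) (ha : Squarefree a)
    (K : Type*) [Field K] [NumberField K]
    (hK : Module.finrank ℚ K = 2) (α : K) (hα : α ^ 2 = (a : K))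
    (β : 𝓞 K) (n : ℤ) (hn : Algebra.norm ℚ (β : K) = (n : ℚ)) :
    ∃ s t : ℤ, s ^ 2 - a * t ^ 2 = 4 * n := by
  -- a is not a rational square
  have hsq : ∀ q : ℚ, q ^ 2 ≠ (a : ℚ) := by
    intro q hq
    obtain ⟨u, hu⟩ := rat_int_of_sq 1 squarefree_one q a (by push_cast; rw [one_mul, hq])
    have hua : u ^ 2 = a := by
      have : ((u^2 : ℤ) : ℚ) = ((a:ℤ):ℚ) := by push_cast; rw [hu, hq]
      exact_mod_cast this
    have : IsUnit u := ha u (by rw [← sq]; exact hua ▸ dvd_rfl)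
    rcases Int.isUnit_iff.mp this with h1 | h1 <;> { subst h1; simp at hua; omega }
  have haq0 : (a : K) ≠ 0 := by
    intro h
    exact ha0 (by exact_mod_cast h)
  have hα0 : α ≠ 0 := fun h => haq0 (by rw [← hα, h]; ring)
  have hli : LinearIndependent ℚ ![(1 : K), α] := by
    rw [LinearIndependent.pair_iff]
    intro s t hst
    have hst' : (s:K) + (t:K) * α = 0 := by
      simp only [Algebra.smul_def, mul_one, eq_ratCast] at hst
      exact hst
    by_cases ht : t = 0
    · subst ht
      push_cast at hst'
      simp only [zero_mul, add_zero] at hst'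
      exact ⟨by exact_mod_cast hst', rfl⟩
    · exfalso
      have htK : (t:K) ≠ 0 := by exact_mod_cast ht
      apply hsq (s/t)
      have key : (((s/t : ℚ)^2 : ℚ) : K) = ((a:ℚ) : K) := by
        push_cast
        rw [div_pow, ← hα]
        rw [div_eq_iff (pow_ne_zero 2 htK)]
        have hαv : (t:K) * α = -(s:K) := by linear_combination hst'
        linear_combination (((s:K)) - (t:K)*α) * hαv
      exact_mod_cast key
  have hcard : Fintype.card (Fin 2) = Module.finrank ℚ K := by simp [hK]
  set b : Module.Basis (Fin 2) ℚ K := basisOfLinearIndependentOfCardEqFinrank hli hcard with hbdef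
  have hb : ⇑b = ![(1:K), α] := coe_basisOfLinearIndependentOfCardEqFinrank hli hcard
  have hb0 : b 0 = 1 := by rw [hb]; rfl
  have hb1 : b 1 = α := by rw [hb]; rfl
  set q := b.repr (β:K) 0 with hq
  set r := b.repr (β:K) 1 with hr
  have hβ : (β:K) = q • (1:K) + r • α := by
    conv_lhs => rw [← Module.Basis.sum_repr b (β:K)]
    rw [Fin.sum_univ_two, hb0, hb1]
  have hrepr : ∀ c d : ℚ, b.repr (c • (1:K) + d • α) 0 = c ∧ b.repr (c • (1:K) + d • α) 1 = d := by
    intro c d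
    rw [← hb0, ← hb1]
    constructor <;>
      simp [map_add, map_smul, Module.Basis.repr_self, Finsupp.single_apply]
  have hmul1 : (β:K) * α = ((a:ℚ)*r) • (1:K) + q • α := by
    simp only [Algebra.smul_def, eq_ratCast, mul_one] at hβ ⊢
    push_cast
    linear_combination α * hβ + (r:K) * hα
  have hM := Algebra.leftMulMatrix_eq_repr_mul b (β:K)
  have e00 : Algebra.leftMulMatrix b (β:K) 0 0 = q := by
    rw [hM, hb0, mul_one, hβ]; exact (hrepr q r).1
  have e10 : Algebra.leftMulMatrix b (β:K) 1 0 = r := by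
    rw [hM, hb0, mul_one, hβ]; exact (hrepr q r).2
  have e01 : Algebra.leftMulMatrix b (β:K) 0 1 = (a:ℚ)*r := by
    rw [hM, hb1, hmul1]; exact (hrepr _ _).1
  have e11 : Algebra.leftMulMatrix b (β:K) 1 1 = q := by
    rw [hM, hb1, hmul1]; exact (hrepr _ _).2
  have hdet := Algebra.norm_eq_matrix_det b (β:K)
  rw [Matrix.det_fin_two, e00, e10, e01, e11, hn] at hdet
  have htr := Algebra.trace_eq_matrix_trace b (β:K)
  rw [Matrix.trace_fin_two, e00, e11] at htr
  have hint : IsIntegral ℤ (Algebra.trace ℚ K ((β:K))) :=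
    Algebra.isIntegral_trace (NumberField.RingOfIntegers.isIntegral_coe β)
  rw [htr] at hint
  obtain ⟨s, hs⟩ := IsIntegrallyClosed.isIntegral_iff.mp hint
  rw [eq_intCast] at hs
  obtain ⟨t, ht⟩ := rat_int_of_sq a ha (2*r) (s^2 - 4*n) (by push_cast; linear_combination 4 * hdet - ((s:ℚ) + q + q) * hs)
  refine ⟨s, t, ?_⟩
  have : ((s:ℚ))^2 - (a:ℚ) * (t:ℚ)^2 = 4*(n:ℚ) := by
    rw [ht]
    linear_combination ((s:ℚ) + q + q) * hs - 4 * hdet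
  exact_mod_cast this

open NumberField in
lemma exists_prime_of_norm (K : Type*) [Field K] [NumberField K]
    (hK : Module.finrank ℚ K = 2) (p : ℕ) (hp : p.Prime)
    (h : ¬ (Ideal.span {(p : 𝓞 K)}).IsPrime) :
    ∃ P : Ideal (𝓞 K), P ≠ ⊥ ∧ Ideal.absNorm P = p := by
  set J := Ideal.span {(p : 𝓞 K)} with hJ
  have hpK : (p : 𝓞 K) = algebraMap ℤ (𝓞 K) (p : ℤ) := by
    simp [map_natCast]
  have hJnorm : Ideal.absNorm J = p ^ 2 := by
    have hnorm := Algebra.norm_algebraMap_of_basis (Module.Free.chooseBasis ℤ (𝓞 K)) (p : ℤ)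
    have hcard : Fintype.card (Module.Free.ChooseBasisIndex ℤ (𝓞 K)) = 2 := by
      rw [← Module.finrank_eq_card_chooseBasisIndex, NumberField.RingOfIntegers.rank, hK]
    rw [hcard] at hnorm
    rw [hJ, Ideal.absNorm_span_singleton, hpK, hnorm]
    simp [Int.natAbs_pow]
  have hJbot : J ≠ ⊥ := by
    rw [hJ, Ne, Ideal.span_singleton_eq_bot]
    exact_mod_cast hp.ne_zero
  have hJtop : J ≠ ⊤ := by
    intro htop
    have := Ideal.absNorm_eq_one_iff.mpr htop
    rw [hJnorm] at this
    nlinarith [hp.two_le]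
  obtain ⟨P, hPmax, hJP⟩ := Ideal.exists_le_maximal J hJtop
  have hPbot : P ≠ ⊥ := by
    intro hb
    exact hJbot (le_bot_iff.mp (hb ▸ hJP))
  have hPdvd : P ∣ J := (Ideal.dvd_iff_le).mpr hJP
  have hnd : Ideal.absNorm P ∣ p ^ 2 := hJnorm ▸ map_dvd Ideal.absNorm hPdvd
  obtain ⟨m, hm2, hPn⟩ := (Nat.dvd_prime_pow hp).mp hnd
  interval_cases m
  · rw [pow_zero] at hPn
    exact absurd (Ideal.absNorm_eq_one_iff.mp hPn) hPmax.ne_top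
  · exact ⟨P, hPbot, by rwa [pow_one] at hPn⟩
  · exfalso
    obtain ⟨C, hC⟩ := hPdvd
    have h1 : Ideal.absNorm J = p ^ 2 * Ideal.absNorm C := by
      rw [hC, map_mul, hPn]
    have hself : p ^ 2 * Ideal.absNorm C = p ^ 2 * 1 := by
      rw [← h1, hJnorm, mul_one]
    have hppos : 0 < p ^ 2 := pow_pos hp.pos 2
    have hC1 : Ideal.absNorm C = 1 := Nat.eq_of_mul_eq_mul_left hppos hself
    rw [Ideal.absNorm_eq_one_iff.mp hC1, Ideal.mul_top] at hC
    exact h (hC ▸ hPmax.isPrime)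

set_option synthInstance.maxHeartbeats 1000000 in
open NumberField in
lemma exists_ideal_norm (K : Type*) [Field K] [NumberField K]
    (hK : Module.finrank ℚ K = 2) :
    ∀ n : ℕ, 0 < n → (∀ p : ℕ, p.Prime → p ∣ n → ¬ (Ideal.span {(p : 𝓞 K)}).IsPrime) →
    ∃ I : Ideal (𝓞 K), I ≠ ⊥ ∧ Ideal.absNorm I = n := by
  intro n
  induction n using Nat.strong_induction_on with
  | _ n ih =>
    intro hn hfac
    by_cases hn1 : n = 1
    · subst hn1
      exact ⟨⊤, by simp, Ideal.absNorm_eq_one_iff.mpr rfl⟩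
    · set p := n.minFac with hpdef
      have hp : p.Prime := Nat.minFac_prime hn1
      obtain ⟨P, hPb, hPn⟩ := exists_prime_of_norm K hK p hp (hfac p hp n.minFac_dvd)
      have hlt : n / p < n := Nat.div_lt_self hn hp.one_lt
      have hpos : 0 < n / p := Nat.div_pos (Nat.minFac_le hn) hp.pos
      obtain ⟨I, hIb, hIn⟩ := ih (n / p) hlt hpos
        (fun q hq hdvd => hfac q hq (hdvd.trans (Nat.div_dvd_of_dvd n.minFac_dvd)))
      refine ⟨P * I, ?_, ?_⟩
      · rw [Ne, Ideal.mul_eq_bot]; tauto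
      · rw [_root_.map_mul Ideal.absNorm P I, hPn, hIn, Nat.mul_div_cancel' n.minFac_dvd]

open NumberField in
theorem stmt_10 (a : ℤ) (ha0 : a ≠ 0) (ha : Squarefree a)
    (K : Type*) [Field K] [NumberField K]
    (hK : Module.finrank ℚ K = 2) (α : K) (hα : α ^ 2 = (a : K))
    (htriv : ∀ I : FractionalIdeal (𝓞 K)⁰ K, I ≠ 0 →
      ∃ β : K, 0 < Algebra.norm ℚ β ∧ I = FractionalIdeal.spanSingleton (𝓞 K)⁰ β)
    (N : ℤ) (hN : 0 < N)
    (hfac : ∀ p : ℕ, p.Prime → (p : ℤ) ∣ N → ¬ (Ideal.span {(p : 𝓞 K)}).IsPrime) :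
    ∃ x y : ℤ, (if a % 4 = 1 then x ^ 2 - x * y + ((1 - a) / 4) * y ^ 2
      else x ^ 2 - a * y ^ 2) = N := by
  by_cases ha1 : a = 1
  · subst ha1
    refine ⟨N, N - 1, ?_⟩
    rw [if_pos (show (1:ℤ) % 4 = 1 by norm_num)]
    norm_num
    ring
  · obtain ⟨I, hIb, hIn⟩ := exists_ideal_norm K hK N.toNat (by omega)
      (fun p hp hdvd => hfac p hp (by
        have : (p:ℤ) ∣ (N.toNat : ℤ) := Int.natCast_dvd_natCast.mpr hdvd
        rwa [Int.toNat_of_nonneg hN.le] at this))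
    have hIfz : (I : FractionalIdeal (𝓞 K)⁰ K) ≠ 0 :=
      FractionalIdeal.coeIdeal_ne_zero.mpr hIb
    obtain ⟨β, hβpos, hβspan⟩ := htriv _ hIfz
    have hβmem : β ∈ (I : FractionalIdeal (𝓞 K)⁰ K) := by
      rw [hβspan]; exact FractionalIdeal.mem_spanSingleton_self _ β
    rw [FractionalIdeal.mem_coeIdeal] at hβmem
    obtain ⟨β', hβ'I, hβ'⟩ := hβmem
    have hspan : (Ideal.span {β'} : Ideal (𝓞 K)) = I := by
      apply FractionalIdeal.coeIdeal_injective (K := K)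
      show ((Ideal.span {β'} : Ideal (𝓞 K)) : FractionalIdeal (𝓞 K)⁰ K) = (I : FractionalIdeal (𝓞 K)⁰ K)
      rw [FractionalIdeal.coeIdeal_span_singleton, hβ', ← hβspan]
    have hnormβ : Algebra.norm ℤ β' = N := by
      have h1 : (Algebra.norm ℤ β').natAbs = N.toNat := by
        rw [← Ideal.absNorm_span_singleton, hspan, hIn]
      have h2 : (0:ℚ) < ((Algebra.norm ℤ β' : ℤ) : ℚ) := by
        rw [Algebra.coe_norm_int, NumberField.RingOfIntegers.coe_eq_algebraMap, hβ']
        exact hβpos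
      have h2' : 0 < Algebra.norm ℤ β' := by exact_mod_cast h2
      omega
    have hn' : Algebra.norm ℚ ((β' : K)) = ((N : ℤ) : ℚ) := by
      rw [← Algebra.coe_norm_int, hnormβ]
    obtain ⟨s, t, hst⟩ := quad_repr a ha0 ha1 ha K hK α hα β' N hn'
    have h4a : ¬ (4:ℤ) ∣ a := by
      intro hd
      have h2u := ha 2 (by rwa [show (2:ℤ)*2 = 4 by norm_num])
      rcases Int.isUnit_iff.mp h2u with h | h <;> omega
    have hz4 : (4 : ZMod 4) = 0 := by decide
    have hcast : ((s:ZMod 4))^2 - ((a:ZMod 4)) * ((t:ZMod 4))^2 = 0 := by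
      have : ((s^2 - a*t^2 : ℤ) : ZMod 4) = ((4*N : ℤ) : ZMod 4) := by rw [hst]
      push_cast at this
      rw [hz4, zero_mul] at this
      exact this
    have ha4 : a % 4 = 1 ∨ a % 4 = 2 ∨ a % 4 = 3 := by omega
    have haz : ((a : ℤ) : ZMod 4) = ((a % 4 : ℤ) : ZMod 4) := by
      have heq : a = 4*(a/4) + a % 4 := by omega
      conv_lhs => rw [heq]
      push_cast
      rw [hz4, zero_mul, zero_add]
    rcases ha4 with h4 | h4 | h4
    · simp only [if_pos h4]
      have hz : ((s : ZMod 4))^2 = ((t : ZMod 4))^2 := by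
        rw [haz, h4] at hcast
        push_cast at hcast
        linear_combination hcast
      have hkey := zmod_key1 _ _ hz
      have hpar : (2:ℤ) ∣ s + t := by
        apply (ZMod.intCast_zmod_eq_zero_iff_dvd _ 2).mp
        rw [← map_intCast (ZMod.castHom (show (2:ℕ) ∣ 4 by norm_num) (ZMod 2)) (s+t)]
        push_cast
        exact hkey
      obtain ⟨x, hx⟩ := hpar
      refine ⟨x, t, ?_⟩
      have hc : ((1 - a)/4) * 4 = 1 - a := Int.ediv_mul_cancel (by omega)
      have h4g : (4:ℤ) * (x^2 - x*t + ((1-a)/4)*t^2) = 4 * N := by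
        linear_combination t^2 * hc - (2*x + s - t) * hx + hst
      exact mul_left_cancel₀ (by norm_num : (4:ℤ) ≠ 0) h4g
    · simp only [if_neg (show ¬ a % 4 = 1 by omega)]
      have hz : ((s : ZMod 4))^2 = 2 * ((t : ZMod 4))^2 := by
        rw [haz, h4] at hcast
        push_cast at hcast
        linear_combination hcast
      have hkey := zmod_key2 _ _ (Or.inl hz)
      have hs2 : (2:ℤ) ∣ s := by
        apply (ZMod.intCast_zmod_eq_zero_iff_dvd _ 2).mp
        rw [← map_intCast (ZMod.castHom (show (2:ℕ) ∣ 4 by norm_num) (ZMod 2)) s]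
        exact hkey.1
      have ht2 : (2:ℤ) ∣ t := by
        apply (ZMod.intCast_zmod_eq_zero_iff_dvd _ 2).mp
        rw [← map_intCast (ZMod.castHom (show (2:ℕ) ∣ 4 by norm_num) (ZMod 2)) t]
        exact hkey.2
      obtain ⟨x, hx⟩ := hs2
      obtain ⟨y, hy⟩ := ht2
      refine ⟨x, y, ?_⟩
      have h4g : (4:ℤ) * (x^2 - a*y^2) = 4 * N := by
        linear_combination hst - (s + 2*x) * hx + a * (t + 2*y) * hy
      exact mul_left_cancel₀ (by norm_num : (4:ℤ) ≠ 0) h4g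
    · simp only [if_neg (show ¬ a % 4 = 1 by omega)]
      have hz : ((s : ZMod 4))^2 = 3 * ((t : ZMod 4))^2 := by
        rw [haz, h4] at hcast
        push_cast at hcast
        linear_combination hcast
      have hkey := zmod_key2 _ _ (Or.inr hz)
      have hs2 : (2:ℤ) ∣ s := by
        apply (ZMod.intCast_zmod_eq_zero_iff_dvd _ 2).mp
        rw [← map_intCast (ZMod.castHom (show (2:ℕ) ∣ 4 by norm_num) (ZMod 2)) s]
        exact hkey.1
      have ht2 : (2:ℤ) ∣ t := by
        apply (ZMod.intCast_zmod_eq_zero_iff_dvd _ 2).mp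
        rw [← map_intCast (ZMod.castHom (show (2:ℕ) ∣ 4 by norm_num) (ZMod 2)) t]
        exact hkey.2
      obtain ⟨x, hx⟩ := hs2
      obtain ⟨y, hy⟩ := ht2
      refine ⟨x, y, ?_⟩
      have h4g : (4:ℤ) * (x^2 - a*y^2) = 4 * N := by
        linear_combination hst - (s + 2*x) * hx + a * (t + 2*y) * hy
      exact mul_left_cancel₀ (by norm_num : (4:ℤ) ≠ 0) h4g
end

section
/- Let a be a non-zero squarefree integer, K = Q(√a), and h the order of its narrow class group Cl⁺(K). Let S be a finite set of rational primes none of which is inert in O_K, and let p_1, …, p_{h−1} be split primes of Z not in S, with prime ideals 𝔭_j of O_K above p_j, such that the classes [𝔭_1], …, [𝔭_{h−1}] are exactly the distinct non-trivial elements of Cl⁺(K). If the equation N_K(x, y) = p_1 ⋯ p_{h−1} · ∏_{p ∈ S} p has a solution with x, y ∈ Q, then it has a solution with x, y ∈ Z. -/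
open scoped nonZeroDivisors
open NumberField

/-- The narrow class group of a number field: fractional ideals modulo principal
fractional ideals generated by an element of positive norm. -/
noncomputable abbrev narrowClassGroup (K : Type*) [Field K] [NumberField K] : Type _ :=
  (FractionalIdeal (𝓞 K)⁰ K)ˣ ⧸ Subgroup.closure
    {u : (FractionalIdeal (𝓞 K)⁰ K)ˣ | ∃ β : K, 0 < Algebra.norm ℚ β ∧
      (u : FractionalIdeal (𝓞 K)⁰ K) = FractionalIdeal.spanSingleton (𝓞 K)⁰ β}

/-- The class of a nonzero integral ideal in the narrow class group. -/
noncomputable def narrowClassGroup.mk0 (K : Type*) [Field K] [NumberField K]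
    (I : (Ideal (𝓞 K))⁰) : narrowClassGroup K :=
  QuotientGroup.mk (FractionalIdeal.mk0 K I)

section NCG
variable (K : Type*) [Field K] [NumberField K]

/-- The set of principal fractional ideals with positive-norm generator is a subgroup. -/
def posSubgroup : Subgroup (FractionalIdeal (𝓞 K)⁰ K)ˣ where
  carrier := {u : (FractionalIdeal (𝓞 K)⁰ K)ˣ | ∃ β : K, 0 < Algebra.norm ℚ β ∧
      (u : FractionalIdeal (𝓞 K)⁰ K) = FractionalIdeal.spanSingleton (𝓞 K)⁰ β}
  mul_mem' := by
    rintro u v ⟨β, hβ, hu⟩ ⟨γ, hγ, hv⟩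
    exact ⟨β * γ, by rw [map_mul]; positivity, by
      rw [Units.val_mul, hu, hv, FractionalIdeal.spanSingleton_mul_spanSingleton]⟩
  one_mem' := ⟨1, by rw [map_one]; norm_num, by
    rw [Units.val_one, FractionalIdeal.spanSingleton_one]⟩
  inv_mem' := by
    rintro u ⟨β, hβ, hu⟩
    have h0 : Algebra.norm ℚ β ≠ 0 := ne_of_gt hβ
    refine ⟨β⁻¹, ?_, ?_⟩
    · have : Algebra.norm ℚ β⁻¹ * Algebra.norm ℚ β = 1 := by
        rw [← map_mul, inv_mul_cancel₀, map_one]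
        intro h; rw [h, Algebra.norm_zero] at hβ; exact lt_irrefl 0 hβ
      nlinarith [this]
    · rw [← FractionalIdeal.spanSingleton_inv, ← hu]
      exact u.val_inv_eq_inv_val

lemma closure_posSubgroup : Subgroup.closure
    {u : (FractionalIdeal (𝓞 K)⁰ K)ˣ | ∃ β : K, 0 < Algebra.norm ℚ β ∧
      (u : FractionalIdeal (𝓞 K)⁰ K) = FractionalIdeal.spanSingleton (𝓞 K)⁰ β}
    = posSubgroup K := Subgroup.closure_eq (posSubgroup K)

lemma narrowClassGroup.mk0_mul (I J : (Ideal (𝓞 K))⁰) :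
    narrowClassGroup.mk0 K (I * J) = narrowClassGroup.mk0 K I * narrowClassGroup.mk0 K J := by
  unfold narrowClassGroup.mk0
  rw [(FractionalIdeal.mk0 K).map_mul]
  rfl

lemma narrowClassGroup.mk0_eq_one_iff (I : (Ideal (𝓞 K))⁰) :
    narrowClassGroup.mk0 K I = 1 ↔ ∃ γ : 𝓞 K, 0 < Algebra.norm ℤ γ ∧
      Ideal.span {γ} = (I : Ideal (𝓞 K)) := by
  unfold narrowClassGroup.mk0
  rw [QuotientGroup.eq_one_iff, closure_posSubgroup]
  constructor
  · rintro ⟨β, hβ, hu⟩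
    rw [FractionalIdeal.coe_mk0] at hu
    have hβmem : β ∈ ((I : Ideal (𝓞 K)) : FractionalIdeal (𝓞 K)⁰ K) := by
      rw [hu]
      exact FractionalIdeal.mem_spanSingleton_self _ _
    rw [FractionalIdeal.mem_coeIdeal] at hβmem
    obtain ⟨γ, hγI, hγβ⟩ := hβmem
    refine ⟨γ, ?_, ?_⟩
    · have h1 : (Algebra.norm ℤ γ : ℚ) = Algebra.norm ℚ (γ : K) := Algebra.coe_norm_int γ
      rw [show ((γ : K)) = β from hγβ] at h1
      have : (0:ℚ) < (Algebra.norm ℤ γ : ℚ) := h1 ▸ hβ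
      exact_mod_cast this
    · apply FractionalIdeal.coeIdeal_injective (K := K)
      show ((Ideal.span {γ} : Ideal (𝓞 K)) : FractionalIdeal (𝓞 K)⁰ K) = ((I : Ideal (𝓞 K)) : FractionalIdeal (𝓞 K)⁰ K)
      rw [hu, FractionalIdeal.coeIdeal_span_singleton, hγβ]
  · rintro ⟨γ, hγ, hspan⟩
    refine ⟨(γ : K), ?_, ?_⟩
    · have : (Algebra.norm ℤ γ : ℚ) = Algebra.norm ℚ (γ : K) := Algebra.coe_norm_int γ
      rw [← this]
      exact_mod_cast hγ
    · rw [FractionalIdeal.coe_mk0, ← hspan, FractionalIdeal.coeIdeal_span_singleton]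

end NCG

section NCG2
variable (K : Type*) [Field K] [NumberField K]

lemma natAbs_cast_OK (n : ℕ) : ((n : ℤ) : 𝓞 K) = (n : 𝓞 K) := Int.cast_natCast n

lemma norm_intCast (hK : Module.finrank ℚ K = 2) (n : ℤ) :
    Algebra.norm ℤ ((n : 𝓞 K)) = n ^ 2 := by
  have h1 : (Algebra.norm ℤ ((n : 𝓞 K)) : ℚ) = Algebra.norm ℚ (((n : 𝓞 K) : K)) :=
    Algebra.coe_norm_int _
  have h2 : (((n : 𝓞 K) : K)) = algebraMap ℚ K (n : ℚ) := by push_cast; simp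
  rw [h2, Algebra.norm_algebraMap, hK] at h1
  exact_mod_cast h1

lemma absNorm_span_natCast (hK : Module.finrank ℚ K = 2) (r : ℕ) :
    Ideal.absNorm (Ideal.span {(r : 𝓞 K)}) = r ^ 2 := by
  rw [← natAbs_cast_OK, Ideal.absNorm_span_singleton, norm_intCast K hK]
  simp [Int.natAbs_pow]

lemma exists_resChar (hK : Module.finrank ℚ K = 2) (P : Ideal (𝓞 K)) (hP : P.IsPrime)
    (h0 : P ≠ ⊥) : ∃ r : ℕ, r.Prime ∧ ((r : 𝓞 K) ∈ P) ∧ Ideal.absNorm P ∣ r ^ 2 := by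
  set c : Ideal ℤ := P.comap (algebraMap ℤ (𝓞 K)) with hc
  have hcp : c.IsPrime := Ideal.IsPrime.comap _
  have habs : ((Ideal.absNorm P : ℤ)) ∈ c := by
    rw [hc, Ideal.mem_comap]
    simpa using Ideal.absNorm_mem P
  have hcne : c ≠ ⊥ := by
    intro hbot
    rw [hbot] at habs
    simp only [Ideal.mem_bot] at habs
    have : Ideal.absNorm P = 0 := by exact_mod_cast habs
    rw [Ideal.absNorm_eq_zero_iff] at this
    exact h0 this
  obtain ⟨g, hg⟩ := (IsPrincipalIdealRing.principal c)
  rw [Ideal.submodule_span_eq] at hg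
  have hgne : g ≠ 0 := by
    rintro rfl; rw [hg] at hcne; simp at hcne
  have hgprime : Prime g := (Ideal.span_singleton_prime hgne).mp (hg ▸ hcp)
  have hgc : g ∈ c := hg ▸ Ideal.mem_span_singleton_self g
  have hgP : ((g : ℤ) : 𝓞 K) ∈ P := by
    rw [hc, Ideal.mem_comap] at hgc
    simpa using hgc
  have hnatP : ((g.natAbs : 𝓞 K)) ∈ P := by
    rw [← natAbs_cast_OK]
    rcases Int.natAbs_eq g with he | he
    · rw [← he]; exact hgP
    · rw [show ((g.natAbs : ℤ)) = -g by omega]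
      push_cast
      exact P.neg_mem hgP
  refine ⟨g.natAbs, Int.prime_iff_natAbs_prime.mp hgprime, hnatP, ?_⟩
  calc Ideal.absNorm P ∣ Ideal.absNorm (Ideal.span {((g.natAbs : ℕ) : 𝓞 K)}) :=
        Ideal.absNorm_dvd_absNorm_of_le (by rwa [Ideal.span_singleton_le_iff_mem])
    _ = g.natAbs ^ 2 := absNorm_span_natCast K hK _

lemma exists_prime_factor_of_dvd_absNorm (hK : Module.finrank ℚ K = 2) (J : Ideal (𝓞 K))
    (hJ : J ≠ ⊥) {ℓ : ℕ} (hl : ℓ.Prime) (hdvd : ℓ ∣ Ideal.absNorm J) :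
    ∃ Q : Ideal (𝓞 K), Prime Q ∧ Q ∣ J ∧ ((ℓ : 𝓞 K) ∈ Q) := by
  obtain ⟨f, hfp, hfa⟩ := UniqueFactorizationMonoid.exists_prime_factors J
    (by rwa [ne_eq, Ideal.zero_eq_bot])
  have hfeq : f.prod = J := by rwa [← associated_iff_eq]
  have habs : Ideal.absNorm J = (f.map Ideal.absNorm).prod := by
    rw [← hfeq]
    exact map_multiset_prod (Ideal.absNorm (S := 𝓞 K)) f
  obtain ⟨m, hm, hlm⟩ := hl.prime.exists_mem_multiset_dvd (s := f.map Ideal.absNorm)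
    (habs ▸ hdvd)
  obtain ⟨Q, hQf, rfl⟩ := Multiset.mem_map.mp hm
  have hQprime : Prime Q := hfp Q hQf
  have hQP : Q.IsPrime := Ideal.isPrime_of_prime hQprime
  have hQne : Q ≠ ⊥ := by
    simpa [Ideal.zero_eq_bot] using hQprime.ne_zero
  obtain ⟨r, hrprime, hrQ, hrdvd⟩ := exists_resChar K hK Q hQP hQne
  have hlr : ℓ = r := by
    have h1 : ℓ ∣ r ^ 2 := dvd_trans hlm hrdvd
    have := hl.dvd_of_dvd_pow h1
    exact (Nat.prime_dvd_prime_iff_eq hl hrprime).mp this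
  exact ⟨Q, hQprime, hfeq ▸ Multiset.dvd_prod hQf, hlr ▸ hrQ⟩

end NCG2

section NCG3
variable (K : Type*) [Field K] [NumberField K]

/-- Narrow class of a nonzero ideal. -/
noncomputable def icls (I : Ideal (𝓞 K)) (hI : I ≠ ⊥) : narrowClassGroup K :=
  narrowClassGroup.mk0 K ⟨I, mem_nonZeroDivisors_of_ne_zero (by rwa [ne_eq, Ideal.zero_eq_bot])⟩

lemma icls_mul (I J : Ideal (𝓞 K)) (hI : I ≠ ⊥) (hJ : J ≠ ⊥) (hIJ : I * J ≠ ⊥) :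
    icls K (I * J) hIJ = icls K I hI * icls K J hJ := by
  unfold icls
  rw [← narrowClassGroup.mk0_mul]
  rfl

lemma icls_span_natCast (hK : Module.finrank ℚ K = 2) (r : ℕ) (hr : 0 < r)
    (hne : Ideal.span {(r : 𝓞 K)} ≠ ⊥) : icls K (Ideal.span {(r : 𝓞 K)}) hne = 1 := by
  unfold icls
  rw [narrowClassGroup.mk0_eq_one_iff]
  exact ⟨(r : 𝓞 K), by
    rw [show ((r : 𝓞 K)) = (((r : ℤ)) : 𝓞 K) from (natAbs_cast_OK K r).symm, norm_intCast K hK]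
    positivity, rfl⟩

lemma absNorm_mul' (I J : Ideal (𝓞 K)) :
    Ideal.absNorm (I * J) = Ideal.absNorm I * Ideal.absNorm J := _root_.map_mul Ideal.absNorm I J

lemma icls_congr (I J : Ideal (𝓞 K)) (hI : I ≠ ⊥) (hJ : J ≠ ⊥) (hpos : I = J) :
    icls K I hI = icls K J hJ := by subst hpos; rfl


lemma icls_eq_one_iff (I : Ideal (𝓞 K)) (hI : I ≠ ⊥) :
    icls K I hI = 1 ↔ ∃ γ : 𝓞 K, 0 < Algebra.norm ℤ γ ∧ Ideal.span {γ} = I :=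
  narrowClassGroup.mk0_eq_one_iff K _

lemma icls_val (I : (Ideal (𝓞 K))⁰) (h : (I : Ideal (𝓞 K)) ≠ ⊥) :
    icls K (I : Ideal (𝓞 K)) h = narrowClassGroup.mk0 K I :=
  congrArg (narrowClassGroup.mk0 K) (Subtype.ext rfl)

end NCG3

section NCG4
variable (K : Type*) [Field K] [NumberField K]

lemma sq_class (hK : Module.finrank ℚ K = 2) (N : ℕ) :
    ∀ I : Ideal (𝓞 K), ∀ hI : I ≠ ⊥, Ideal.absNorm I = N → (∃ n : ℕ, N = n ^ 2) →
      ∃ s : narrowClassGroup K, icls K I hI = s ^ 2 := by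
  induction N using Nat.strong_induction_on with
  | _ N IH =>
    rintro I hI hNorm ⟨n, hn⟩
    by_cases hT : I = ⊤
    · refine ⟨1, ?_⟩
      subst hT
      unfold icls narrowClassGroup.mk0
      have h1 : (⟨⊤, mem_nonZeroDivisors_of_ne_zero (by rwa [ne_eq, Ideal.zero_eq_bot])⟩ :
          (Ideal (𝓞 K))⁰) = 1 := Subtype.ext Ideal.one_eq_top.symm
      rw [h1, map_one]
      simp
    · have hNne : N ≠ 0 := by
        rw [← hNorm]
        simpa [Ideal.absNorm_eq_zero_iff] using hI
      obtain ⟨P, hPirr, hPdvd⟩ := WfDvdMonoid.exists_irreducible_factor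
        (fun hu => hT (Ideal.isUnit_iff.mp hu))
        (show I ≠ 0 by rwa [ne_eq, Ideal.zero_eq_bot])
      have hPprime : Prime P := UniqueFactorizationMonoid.irreducible_iff_prime.mp hPirr
      have hPne : P ≠ ⊥ := by simpa [Ideal.zero_eq_bot] using hPprime.ne_zero
      obtain ⟨r, hr, hrP, hrdvd⟩ := exists_resChar K hK P (Ideal.isPrime_of_prime hPprime) hPne
      have hrO : ((r : 𝓞 K)) ≠ 0 := Nat.cast_ne_zero.mpr hr.ne_zero
      have hspan_ne : Ideal.span {(r : 𝓞 K)} ≠ ⊥ := by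
        simpa [Ideal.span_singleton_eq_bot] using hrO
      have hPs : P ∣ Ideal.span {(r : 𝓞 K)} := by
        rw [Ideal.dvd_iff_le, Ideal.span_singleton_le_iff_mem]; exact hrP
      obtain ⟨Q₀, hQ₀⟩ := hPs
      have habs_span : Ideal.absNorm (Ideal.span {(r : 𝓞 K)}) = r ^ 2 :=
        absNorm_span_natCast K hK r
      have habs_mul : Ideal.absNorm P * Ideal.absNorm Q₀ = r ^ 2 := by
        rw [← absNorm_mul' K, ← hQ₀, habs_span]
      have hPnorm_ne1 : Ideal.absNorm P ≠ 1 := by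
        simpa [Ideal.absNorm_eq_one_iff] using (Ideal.isPrime_of_prime hPprime).ne_top
      have hr2pos : 0 < r ^ 2 := pow_pos hr.pos 2
      -- the "extract an ideal of norm r^2 with square class" continuation
      have key : ∀ A I₃ : Ideal (𝓞 K), I = A * I₃ → Ideal.absNorm A = r ^ 2 →
          (∀ hA : A ≠ ⊥, ∃ t : narrowClassGroup K, icls K A hA = t ^ 2) →
          ∃ s : narrowClassGroup K, icls K I hI = s ^ 2 := by
        rintro A I₃ hfac hAnorm hAcls
        have hAne : A ≠ ⊥ := by rintro rfl; rw [Ideal.bot_mul] at hfac; exact hI hfac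
        have hI₃ne : I₃ ≠ ⊥ := by rintro rfl; rw [Ideal.mul_bot] at hfac; exact hI hfac
        have hNfac : N = r ^ 2 * Ideal.absNorm I₃ := by
          rw [← hNorm, hfac, absNorm_mul' K, hAnorm]
        have hrn : r ∣ n := by
          refine hr.dvd_of_dvd_pow (n := 2) ?_
          rw [← hn, hNfac]
          exact dvd_mul_of_dvd_left (dvd_pow_self r two_ne_zero) _
        obtain ⟨n', rfl⟩ := hrn
        have hI₃norm : Ideal.absNorm I₃ = n' ^ 2 := by
          have : r ^ 2 * Ideal.absNorm I₃ = r ^ 2 * n' ^ 2 := by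
            rw [← hNfac, hn]; ring
          exact Nat.eq_of_mul_eq_mul_left hr2pos this
        have hI₃lt : Ideal.absNorm I₃ < N := by
          have h1 : 0 < Ideal.absNorm I₃ :=
            Nat.pos_of_ne_zero (by simpa [Ideal.absNorm_eq_zero_iff] using hI₃ne)
          have h4 : 4 ≤ r ^ 2 := by nlinarith [hr.two_le]
          calc Ideal.absNorm I₃ < r ^ 2 * Ideal.absNorm I₃ := by nlinarith
            _ = N := hNfac.symm
        obtain ⟨s, hs⟩ := IH (Ideal.absNorm I₃) hI₃lt I₃ hI₃ne rfl ⟨n', hI₃norm⟩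
        obtain ⟨t, ht⟩ := hAcls hAne
        refine ⟨t * s, ?_⟩
        have := icls_mul K A I₃ hAne hI₃ne (hfac ▸ hI)
        rw [icls_congr K I (A * I₃) hI (hfac ▸ hI) hfac, this, hs, ht]
        exact (mul_pow t s 2).symm
      obtain ⟨i, hi2, hiP⟩ := (Nat.dvd_prime_pow hr).mp hrdvd
      interval_cases i
      · exact absurd (by simpa using hiP) hPnorm_ne1
      · -- absNorm P = r
        rw [pow_one] at hiP
        have hQ₀norm : Ideal.absNorm Q₀ = r := by
          have : r * Ideal.absNorm Q₀ = r * r := by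
            rw [← pow_two r, ← habs_mul, hiP]
          exact Nat.eq_of_mul_eq_mul_left hr.pos this
        have hQ₀prime : Prime Q₀ := by
          apply Ideal.prime_of_isPrime
          · rw [ne_eq, ← Ideal.absNorm_eq_zero_iff.not]
            simp [hQ₀norm, hr.ne_zero]
          · apply Ideal.isPrime_of_irreducible_absNorm
            rw [hQ₀norm]
            exact (Nat.irreducible_iff_nat_prime _).mpr hr
        obtain ⟨I₁, hI₁⟩ := hPdvd
        have hI₁ne : I₁ ≠ ⊥ := by rintro rfl; rw [Ideal.mul_bot] at hI₁; exact hI hI₁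
        by_cases hPP : P ∣ I₁
        · obtain ⟨I₂, rfl⟩ := hPP
          refine key (P * P) I₂ (by rw [hI₁, mul_assoc]) (by rw [absNorm_mul' K, hiP, pow_two]) ?_
          intro hA
          refine ⟨icls K P hPne, ?_⟩
          rw [icls_mul K P P hPne hPne hA, sq]
        · by_cases hQdvd : Q₀ ∣ I₁
          · obtain ⟨I₃, rfl⟩ := hQdvd
            refine key (Ideal.span {(r : 𝓞 K)}) I₃ (by rw [hI₁, hQ₀, mul_assoc]) habs_span ?_
            intro hA
            exact ⟨1, by rw [icls_span_natCast K hK r hr.pos hA, one_pow]⟩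
          · -- contradiction : the exponent of r in N is odd
            exfalso
            have hrI₁ : ¬ r ∣ Ideal.absNorm I₁ := by
              intro hdvd
              obtain ⟨Q, hQprime, hQdvd', hrQ⟩ :=
                exists_prime_factor_of_dvd_absNorm K hK I₁ hI₁ne hr hdvd
              have hQspan : Q ∣ P * Q₀ := by
                rw [← hQ₀, Ideal.dvd_iff_le, Ideal.span_singleton_le_iff_mem]
                exact hrQ
              rcases hQprime.dvd_mul.mp hQspan with hd | hd
              · exact hPP ((prime_dvd_prime_iff_eq hQprime hPprime).mp hd ▸ hQdvd')
              · exact hQdvd ((prime_dvd_prime_iff_eq hQprime hQ₀prime).mp hd ▸ hQdvd')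
            have hNr : N = r * Ideal.absNorm I₁ := by
              rw [← hNorm, hI₁, absNorm_mul' K, hiP]
            have hrn : r ∣ n := hr.dvd_of_dvd_pow (n := 2)
              (by rw [← hn, hNr]; exact dvd_mul_right r _)
            obtain ⟨n', rfl⟩ := hrn
            apply hrI₁
            have : r * Ideal.absNorm I₁ = r * (r * n' ^ 2) := by
              rw [← hNr, hn]; ring
            rw [Nat.eq_of_mul_eq_mul_left hr.pos this]
            exact dvd_mul_right r _
      · -- absNorm P = r^2 : P = span {r}
        have hQ₀top : Q₀ = ⊤ := by
          rw [← Ideal.absNorm_eq_one_iff]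
          have h1 := habs_mul
          rw [hiP] at h1
          exact Nat.eq_of_mul_eq_mul_left hr2pos (by rw [mul_one]; exact h1)
        have hPspan : Ideal.span {(r : 𝓞 K)} = P := by rw [hQ₀, hQ₀top, Ideal.mul_top]
        obtain ⟨I₁, hI₁⟩ := hPdvd
        refine key (Ideal.span {(r : 𝓞 K)}) I₁ (by rw [hI₁, hPspan]) habs_span ?_
        intro hA
        exact ⟨1, by rw [icls_span_natCast K hK r hr.pos hA, one_pow]⟩

end NCG4

section QF
variable {K : Type*} [Field K] [NumberField K]

lemma exists_qbasis (hK : Module.finrank ℚ K = 2) (α : K) (hα0 : α ≠ 0)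
    (hirr : ∀ r : ℚ, algebraMap ℚ K r ≠ α) :
    ∃ b : Module.Basis (Fin 2) ℚ K, b 0 = 1 ∧ b 1 = α := by
  have hli : LinearIndependent ℚ ![(1 : K), α] := by
    rw [linearIndependent_fin2]
    refine ⟨by simpa using hα0, fun c hc => ?_⟩
    simp only [Matrix.cons_val_one, Matrix.head_cons, Matrix.cons_val_zero] at hc
    rcases eq_or_ne c 0 with rfl | hc0
    · simp at hc
    · apply hirr c⁻¹
      rw [Algebra.algebraMap_eq_smul_one]
      rw [← hc, smul_smul, inv_mul_cancel₀ hc0, one_smul]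
  refine ⟨basisOfLinearIndependentOfCardEqFinrank hli (by simp [hK]), ?_, ?_⟩ <;>
    simp [coe_basisOfLinearIndependentOfCardEqFinrank]

lemma norm_formula (a : ℤ) (hK : Module.finrank ℚ K = 2) (α : K) (hα : α ^ 2 = (a : K))
    (b : Module.Basis (Fin 2) ℚ K) (hb0 : b 0 = 1) (hb1 : b 1 = α) (u v : ℚ) :
    Algebra.norm ℚ (algebraMap ℚ K u + algebraMap ℚ K v * α) = u ^ 2 - (a : ℚ) * v ^ 2 := by
  set z := algebraMap ℚ K u + algebraMap ℚ K v * α with hz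
  have hαsq : α * α = algebraMap ℚ K ((a : ℤ) : ℚ) := by
    rw [← pow_two, hα, map_intCast]
  have hz0 : z * b 0 = u • b 0 + v • b 1 := by
    rw [hb0, hb1, mul_one, hz, Algebra.smul_def, Algebra.smul_def, mul_one]
  have hz1 : z * b 1 = ((a : ℚ) * v) • b 0 + u • b 1 := by
    rw [hb0, hb1, hz, Algebra.smul_def, Algebra.smul_def, mul_one, add_mul, mul_assoc, hαsq,
      ← map_mul, mul_comm v ((a : ℤ) : ℚ)]
    ring
  have e00 : Algebra.leftMulMatrix b z 0 0 = u := by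
    rw [Algebra.leftMulMatrix_eq_repr_mul, hz0]
    simp
  have e01 : Algebra.leftMulMatrix b z 0 1 = (a : ℚ) * v := by
    rw [Algebra.leftMulMatrix_eq_repr_mul, hz1]
    simp
  have e10 : Algebra.leftMulMatrix b z 1 0 = v := by
    rw [Algebra.leftMulMatrix_eq_repr_mul, hz0]
    simp
  have e11 : Algebra.leftMulMatrix b z 1 1 = u := by
    rw [Algebra.leftMulMatrix_eq_repr_mul, hz1]
    simp
  rw [Algebra.norm_eq_matrix_det b, Matrix.det_fin_two, e00, e01, e10, e11]
  ring

lemma trace_formula (a : ℤ) (hK : Module.finrank ℚ K = 2) (α : K) (hα : α ^ 2 = (a : K))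
    (b : Module.Basis (Fin 2) ℚ K) (hb0 : b 0 = 1) (hb1 : b 1 = α) (u v : ℚ) :
    Algebra.trace ℚ K (algebraMap ℚ K u + algebraMap ℚ K v * α) = 2 * u := by
  set z := algebraMap ℚ K u + algebraMap ℚ K v * α with hz
  have hαsq : α * α = algebraMap ℚ K ((a : ℤ) : ℚ) := by
    rw [← pow_two, hα, map_intCast]
  have hz0 : z * b 0 = u • b 0 + v • b 1 := by
    rw [hb0, hb1, mul_one, hz, Algebra.smul_def, Algebra.smul_def, mul_one]
  have hz1 : z * b 1 = ((a : ℚ) * v) • b 0 + u • b 1 := by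
    rw [hb0, hb1, hz, Algebra.smul_def, Algebra.smul_def, mul_one, add_mul, mul_assoc, hαsq,
      ← map_mul, mul_comm v ((a : ℤ) : ℚ)]
    ring
  have e00 : Algebra.leftMulMatrix b z 0 0 = u := by
    rw [Algebra.leftMulMatrix_eq_repr_mul, hz0]
    simp
  have e11 : Algebra.leftMulMatrix b z 1 1 = u := by
    rw [Algebra.leftMulMatrix_eq_repr_mul, hz1]
    simp
  rw [Algebra.trace_eq_matrix_trace b, Matrix.trace_fin_two, e00, e11]
  ring

end QF


lemma int_of_sqf (a : ℤ) (ha : Squarefree a) (w : ℚ) (c : ℤ)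
    (h : (a : ℚ) * w ^ 2 = (c : ℚ)) : ∃ m : ℤ, w = (m : ℚ) := by
  have hden : ((w.den : ℚ)) ≠ 0 := Nat.cast_ne_zero.mpr w.den_nz
  have h2 : (a : ℚ) * (w.num : ℚ) ^ 2 = (c : ℚ) * (w.den : ℚ) ^ 2 := by
    rw [← Rat.num_div_den w] at h
    field_simp at h
    linarith
  have h3 : a * w.num ^ 2 = c * (w.den : ℤ) ^ 2 := by exact_mod_cast h2
  have h4 : (w.den : ℤ) ^ 2 ∣ a * w.num ^ 2 := Dvd.intro c (by linarith)
  have h5 : (w.den ^ 2 : ℕ) ∣ a.natAbs * w.num.natAbs ^ 2 := by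
    have := Int.natAbs_dvd_natAbs.mpr h4
    simpa [Int.natAbs_mul, Int.natAbs_pow] using this
  have hcop : Nat.Coprime (w.den ^ 2) (w.num.natAbs ^ 2) := (w.reduced.symm.pow 2 2)
  have h6 : (w.den ^ 2 : ℕ) ∣ a.natAbs := (Nat.Coprime.dvd_of_dvd_mul_right hcop h5)
  have h7 : Squarefree a.natAbs := Int.squarefree_natAbs.mpr ha
  have h8 : IsUnit w.den := h7 w.den (by rwa [← pow_two])
  have h9 : w.den = 1 := Nat.isUnit_iff.mp h8
  exact ⟨w.num, by rw [← Rat.num_div_den w, h9]; simp⟩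

lemma int_coords_aux (a t s M : ℤ) (ha : Squarefree a) (heq : t ^ 2 - a * s ^ 2 = 4 * M) :
    ∃ x y : ℤ, (if a % 4 = 1 then x ^ 2 - x * y + ((1 - a) / 4) * y ^ 2
        else x ^ 2 - a * y ^ 2) = M := by
  by_cases hc : a % 4 = 1
  · simp only [if_pos hc]
    obtain ⟨k, hk⟩ : ∃ k : ℤ, a = 4 * k + 1 := ⟨a / 4, by omega⟩
    have hdvd : (4 : ℤ) ∣ 1 - a := ⟨-k, by omega⟩
    have he2 : 4 * ((1 - a) / 4) = 1 - a := Int.mul_ediv_cancel' hdvd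
    have hpar : Even (t - s) := by
      rcases Int.even_or_odd (t - s) with hE | hO
      · exact hE
      · exfalso
        obtain ⟨w, hw⟩ := hO
        have hw' : t = s + 2 * w + 1 := by omega
        have hbad : (1 : ℤ) = 2 * (2 * M - s - 2 * w ^ 2 - 2 * s * w - 2 * w + 2 * k * s ^ 2) := by
          linear_combination heq - (t + s + 2 * w + 1) * hw' + s ^ 2 * hk
        have : (2 : ℤ) ∣ 1 := ⟨_, hbad⟩
        norm_num at this
    obtain ⟨x, hx⟩ := hpar
    have hx2 : t - s = 2 * x := by omega
    refine ⟨x, -s, ?_⟩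
    have h4 : 4 * (x ^ 2 - x * (-s) + ((1 - a) / 4) * (-s) ^ 2) = 4 * M := by
      linear_combination heq - (t + s + 2 * x) * hx2 + s ^ 2 * he2
    exact mul_left_cancel₀ (by norm_num : (4 : ℤ) ≠ 0) h4
  · simp only [if_neg hc]
    have h40 : a % 4 ≠ 0 := by
      intro h0
      have hd : (2 : ℤ) * 2 ∣ a := by omega
      have := ha 2 hd
      rw [Int.isUnit_iff] at this
      omega
    have ha4 : a % 4 = 2 ∨ a % 4 = 3 := by omega
    have hs : Even s := by
      rcases Int.even_or_odd s with hE | hO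
      · exact hE
      · exfalso
        obtain ⟨c, hcs⟩ := hO
        have hcs' : s = 2 * c + 1 := by omega
        rcases Int.even_or_odd t with ⟨d, hd⟩ | ⟨d, hd⟩
        · have hd' : t = 2 * d := by omega
          have : a = 4 * (d ^ 2 - M - a * c ^ 2 - a * c) := by
            linear_combination -heq + (t + 2 * d) * hd' - a * (s + 2 * c + 1) * hcs'
          have h4a : (4 : ℤ) ∣ a := ⟨_, this⟩
          omega
        · have hd' : t = 2 * d + 1 := by omega
          rw [hd', hcs'] at heq
          have : a - 1 = 4 * (d ^ 2 + d - M - a * c ^ 2 - a * c) := by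
            linear_combination -heq
          have h4a : (4 : ℤ) ∣ a - 1 := ⟨_, this⟩
          omega
    obtain ⟨y, hy⟩ := hs
    have hy2 : s = 2 * y := by omega
    have ht : Even t := by
      rcases Int.even_or_odd t with hE | hO
      · exact hE
      · exfalso
        obtain ⟨d, hd⟩ := hO
        have hd' : t = 2 * d + 1 := by omega
        have : (1 : ℤ) = 4 * (M + a * y ^ 2 - d ^ 2 - d) := by
          linear_combination heq - (t + 2 * d + 1) * hd' + a * (s + 2 * y) * hy2
        have h41 : (4 : ℤ) ∣ 1 := ⟨_, this⟩
        norm_num at h41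
    obtain ⟨x, hx⟩ := ht
    have hx2 : t = 2 * x := by omega
    refine ⟨x, y, ?_⟩
    have h4 : 4 * (x ^ 2 - a * y ^ 2) = 4 * M := by
      linear_combination heq - (t + 2 * x) * hx2 + a * (s + 2 * y) * hy2
    exact mul_left_cancel₀ (by norm_num : (4 : ℤ) ≠ 0) h4

lemma int_coords {K : Type*} [Field K] [NumberField K] (a : ℤ) (ha : Squarefree a)
    (hK : Module.finrank ℚ K = 2) (α : K) (hα : α ^ 2 = (a : K))
    (b : Module.Basis (Fin 2) ℚ K) (hb0 : b 0 = 1) (hb1 : b 1 = α)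
    (γ : 𝓞 K) (M : ℤ) (hM : Algebra.norm ℤ γ = M) :
    ∃ x y : ℤ, (if a % 4 = 1 then x ^ 2 - x * y + ((1 - a) / 4) * y ^ 2
        else x ^ 2 - a * y ^ 2) = M := by
  set u : ℚ := b.repr (γ : K) 0 with hu
  set v : ℚ := b.repr (γ : K) 1 with hv
  have hrepr : (γ : K) = algebraMap ℚ K u + algebraMap ℚ K v * α := by
    have hsum := Module.Basis.sum_repr b (γ : K)
    rw [Fin.sum_univ_two] at hsum
    rw [← hsum, hb0, hb1, Algebra.smul_def, Algebra.smul_def, mul_one]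
  have hNQ : u ^ 2 - (a : ℚ) * v ^ 2 = (M : ℚ) := by
    rw [← norm_formula a hK α hα b hb0 hb1 u v, ← hrepr, ← Algebra.coe_norm_int, hM]
  set t : ℤ := Algebra.trace ℤ (𝓞 K) γ with htdef
  have htQ : (t : ℚ) = 2 * u := by
    rw [htdef, Algebra.coe_trace_int, hrepr, trace_formula a hK α hα b hb0 hb1 u v]
  have hc : (a : ℚ) * (2 * v) ^ 2 = ((t ^ 2 - 4 * M : ℤ) : ℚ) := by
    push_cast
    rw [htQ]
    ring_nf
    linear_combination -4 * hNQ
  obtain ⟨s, hs⟩ := int_of_sqf a ha (2 * v) _ hc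
  have heqZ : t ^ 2 - a * s ^ 2 = 4 * M := by
    have hQ : ((t ^ 2 - a * s ^ 2 : ℤ) : ℚ) = ((4 * M : ℤ) : ℚ) := by
      push_cast
      rw [htQ, ← hs]
      linear_combination 4 * hNQ
    exact_mod_cast hQ
  exact int_coords_aux a t s M ha heqZ

section B
variable (K : Type*) [Field K] [NumberField K]
lemma split_norms (hK : Module.finrank ℚ K = 2) {pn : ℕ} (hp : pn.Prime)
    {P Q : Ideal (𝓞 K)} (hP : P.IsPrime) (hQ : Q.IsPrime)
    (hspan : Ideal.span {(pn : 𝓞 K)} = P * Q) :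
    Ideal.absNorm P = pn ∧ Ideal.absNorm Q = pn ∧ P ≠ ⊥ ∧ Q ≠ ⊥ := by
  have hps : ((pn : 𝓞 K)) ≠ 0 := Nat.cast_ne_zero.mpr hp.ne_zero
  have hspanne : Ideal.span {(pn : 𝓞 K)} ≠ ⊥ := by
    simpa [Ideal.span_singleton_eq_bot] using hps
  have hPne : P ≠ ⊥ := by rintro rfl; rw [Ideal.bot_mul] at hspan; exact hspanne hspan
  have hQne : Q ≠ ⊥ := by rintro rfl; rw [Ideal.mul_bot] at hspan; exact hspanne hspan
  have hmul : Ideal.absNorm P * Ideal.absNorm Q = pn ^ 2 := by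
    rw [← absNorm_mul' K, ← hspan, absNorm_span_natCast K hK]
  have hP1 : Ideal.absNorm P ≠ 1 := by
    simpa [Ideal.absNorm_eq_one_iff] using hP.ne_top
  have hQ1 : Ideal.absNorm Q ≠ 1 := by
    simpa [Ideal.absNorm_eq_one_iff] using hQ.ne_top
  have hPd : Ideal.absNorm P ∣ pn ^ 2 := Dvd.intro _ hmul
  have hQd : Ideal.absNorm Q ∣ pn ^ 2 := Dvd.intro_left _ hmul
  obtain ⟨i, hi2, hi⟩ := (Nat.dvd_prime_pow hp).mp hPd
  obtain ⟨j, hj2, hj⟩ := (Nat.dvd_prime_pow hp).mp hQd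
  have h2 : pn ^ i * pn ^ j = pn ^ 2 := by rw [← hi, ← hj]; exact hmul
  rw [← pow_add] at h2
  have hij : i + j = 2 := Nat.pow_right_injective hp.two_le h2
  have hine : i ≠ 0 := by rintro rfl; rw [pow_zero] at hi; exact hP1 hi
  have hjne : j ≠ 0 := by rintro rfl; rw [pow_zero] at hj; exact hQ1 hj
  have : i = 1 ∧ j = 1 := by omega
  refine ⟨by rw [hi, this.1, pow_one], by rw [hj, this.2, pow_one], hPne, hQne⟩

lemma split_ideal (hK : Module.finrank ℚ K = 2) {q : ℕ} (hq : q.Prime)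
    (hnp : ¬ (Ideal.span {(q : 𝓞 K)}).IsPrime) :
    ∃ P : Ideal (𝓞 K), P.IsPrime ∧ P ≠ ⊥ ∧ Ideal.absNorm P = q := by
  have hps : ((q : 𝓞 K)) ≠ 0 := Nat.cast_ne_zero.mpr hq.ne_zero
  have hspanne : Ideal.span {(q : 𝓞 K)} ≠ ⊥ := by
    simpa [Ideal.span_singleton_eq_bot] using hps
  have habs : Ideal.absNorm (Ideal.span {(q : 𝓞 K)}) = q ^ 2 := absNorm_span_natCast K hK q
  have hnu : ¬ IsUnit (Ideal.span {(q : 𝓞 K)}) := by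
    rw [Ideal.isUnit_iff]
    intro h
    rw [h, Ideal.absNorm_top] at habs
    nlinarith [hq.two_le]
  obtain ⟨P, hPirr, hPdvd⟩ := WfDvdMonoid.exists_irreducible_factor hnu
    (show Ideal.span {(q : 𝓞 K)} ≠ 0 by rwa [ne_eq, Ideal.zero_eq_bot])
  have hPprime : Prime P := UniqueFactorizationMonoid.irreducible_iff_prime.mp hPirr
  have hPne : P ≠ ⊥ := by simpa [Ideal.zero_eq_bot] using hPprime.ne_zero
  have hPP : P.IsPrime := Ideal.isPrime_of_prime hPprime
  obtain ⟨C, hC⟩ := hPdvd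
  have hmul : Ideal.absNorm P * Ideal.absNorm C = q ^ 2 := by
    rw [← absNorm_mul' K, ← hC, habs]
  have hP1 : Ideal.absNorm P ≠ 1 := by
    simpa [Ideal.absNorm_eq_one_iff] using hPP.ne_top
  obtain ⟨i, hi2, hi⟩ := (Nat.dvd_prime_pow hq).mp (Dvd.intro _ hmul)
  have hine : i ≠ 0 := by rintro rfl; rw [pow_zero] at hi; exact hP1 hi
  have hi1 : i = 1 := by
    rcases Nat.lt_or_ge i 2 with h | h
    · omega
    · exfalso
      have hi22 : i = 2 := by omega
      rw [hi22] at hi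
      rw [hi] at hmul
      have hC1 : Ideal.absNorm C = 1 := by
        have hq2 : 0 < q ^ 2 := pow_pos hq.pos 2
        exact Nat.eq_of_mul_eq_mul_left hq2 (by rw [mul_one]; exact hmul)
      rw [Ideal.absNorm_eq_one_iff] at hC1
      rw [hC1, Ideal.mul_top] at hC
      exact hnp (hC ▸ hPP)
  exact ⟨P, hPP, hPne, by rw [hi, hi1, pow_one]⟩

end B

theorem stmt_11 (a : ℤ) (ha0 : a ≠ 0) (ha : Squarefree a)
    (K : Type*) [Field K] [NumberField K]
    (hK : Module.finrank ℚ K = 2) (α : K) (hα : α ^ 2 = (a : K))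
    (h : ℕ) (hh : Nat.card (narrowClassGroup K) = h)
    -- a finite set of rational primes, none of which is inert in `𝓞 K`
    (S : Finset ℕ) (hS : ∀ q ∈ S, q.Prime ∧ ¬ (Ideal.span {(q : 𝓞 K)}).IsPrime)
    -- split primes `p j` not in `S`, with prime ideals `𝔭 j` above them
    (p : Fin (h - 1) → ℕ) (hpinj : Function.Injective p)
    (hpprime : ∀ j, (p j).Prime) (hpS : ∀ j, p j ∉ S)
    (𝔭 : Fin (h - 1) → (Ideal (𝓞 K))⁰)
    (hsplit : ∀ j, (𝔭 j : Ideal (𝓞 K)).IsPrime ∧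
      ∃ 𝔮 : Ideal (𝓞 K), 𝔮.IsPrime ∧ 𝔮 ≠ (𝔭 j : Ideal (𝓞 K)) ∧
        Ideal.span {((p j : ℤ) : 𝓞 K)} = (𝔭 j : Ideal (𝓞 K)) * 𝔮)
    -- the classes of the `𝔭 j` are exactly the distinct non-trivial elements of `Cl⁺(K)`
    (hclinj : Function.Injective fun j => narrowClassGroup.mk0 K (𝔭 j))
    (hcl : ∀ c : narrowClassGroup K, c ≠ 1 ↔ ∃ j, narrowClassGroup.mk0 K (𝔭 j) = c)
    -- if the norm-form equation has a rational solution
    (hrat : ∃ x y : ℚ, (if a % 4 = 1 then x ^ 2 - x * y + (((1 - a) / 4 : ℤ) : ℚ) * y ^ 2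
        else x ^ 2 - (a : ℚ) * y ^ 2) =
      ((∏ j, (p j : ℤ)) * ∏ q ∈ S, (q : ℤ) : ℤ)) :
    -- then it has an integral solution
    ∃ x y : ℤ, (if a % 4 = 1 then x ^ 2 - x * y + ((1 - a) / 4) * y ^ 2
        else x ^ 2 - a * y ^ 2) =
      (∏ j, (p j : ℤ)) * ∏ q ∈ S, (q : ℤ) := by
  set NZ : ℤ := (∏ j, (p j : ℤ)) * ∏ q ∈ S, (q : ℤ) with hNZdef
  set Nn : ℕ := (∏ j, p j) * ∏ q ∈ S, q with hNndef
  have hNZNn : NZ = (Nn : ℤ) := by rw [hNZdef, hNndef]; push_cast; ring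
  have hNn0 : Nn ≠ 0 := by
    rw [hNndef]
    apply Nat.mul_ne_zero
    · exact Finset.prod_ne_zero_iff.mpr fun j _ => (hpprime j).ne_zero
    · exact Finset.prod_ne_zero_iff.mpr fun q hq => (hS q hq).1.ne_zero
  by_cases ha1 : a = 1
  · subst ha1
    refine ⟨1, 1 - NZ, ?_⟩
    have h14 : (1 : ℤ) % 4 = 1 := by decide
    simp only [if_pos h14]
    norm_num
  -- the general case
  · have hα0 : α ≠ 0 := by
      intro h0
      rw [h0] at hα
      have : ((a : ℤ) : K) = 0 := by rw [← hα]; ring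
      exact ha0 (by exact_mod_cast this)
    have hirr : ∀ r : ℚ, algebraMap ℚ K r ≠ α := by
      intro r hr
      have h2 : algebraMap ℚ K (r ^ 2) = algebraMap ℚ K ((a : ℚ)) := by
        rw [map_pow, hr, hα, map_intCast]
      have h3 : r ^ 2 = (a : ℚ) := (algebraMap ℚ K).injective h2
      obtain ⟨m, hm⟩ := int_of_sqf 1 squarefree_one r a (by rw [h3]; norm_num)
      have ham : a = m * m := by
        have h4 : ((m : ℚ)) ^ 2 = (a : ℚ) := by rw [← hm, h3]
        have h5 : ((m * m : ℤ) : ℚ) = ((a : ℤ) : ℚ) := by push_cast; linear_combination h4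
        exact_mod_cast h5.symm
      have hmu := ha m ⟨1, by rw [ham]; ring⟩
      rw [Int.isUnit_iff] at hmu
      rcases hmu with rfl | rfl
      · exact ha1 (by omega)
      · exact ha1 (by omega)
    obtain ⟨b, hb0, hb1⟩ := exists_qbasis hK α hα0 hirr
    obtain ⟨x, y, hxy⟩ := hrat
    -- a rational point on `u² - a v² = NZ`
    obtain ⟨u, v, huv⟩ : ∃ u v : ℚ, u ^ 2 - (a : ℚ) * v ^ 2 = (NZ : ℚ) := by
      by_cases hc : a % 4 = 1
      · rw [if_pos hc] at hxy
        have hdvd : (4 : ℤ) ∣ 1 - a := ⟨-((a - 1) / 4), by omega⟩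
        have he2 : 4 * ((1 - a) / 4) = 1 - a := Int.mul_ediv_cancel' hdvd
        have he2Q : 4 * (((1 - a) / 4 : ℤ) : ℚ) = 1 - (a : ℚ) := by exact_mod_cast he2
        refine ⟨x - y / 2, -(y / 2), ?_⟩
        linear_combination hxy - (y ^ 2 / 4) * he2Q
      · rw [if_neg hc] at hxy
        exact ⟨x, y, hxy⟩
    -- clear denominators
    set D : ℤ := (u.den : ℤ) * (v.den : ℤ) with hDdef
    have hDpos : 0 < D := by
      rw [hDdef]
      exact mul_pos (by exact_mod_cast u.pos) (by exact_mod_cast v.pos)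
    set m : ℤ := u.num * (v.den : ℤ) with hmdef
    set n : ℤ := v.num * (u.den : ℤ) with hndef
    have hm : (m : ℚ) = (D : ℚ) * u := by
      rw [hmdef, hDdef]
      push_cast
      rw [show (u.num : ℚ) = u * (u.den : ℚ) from (Rat.mul_den_eq_num u).symm]
      ring
    have hn : (n : ℚ) = (D : ℚ) * v := by
      rw [hndef, hDdef]
      push_cast
      rw [show (v.num : ℚ) = v * (v.den : ℚ) from (Rat.mul_den_eq_num v).symm]
      ring
    -- the integral element γ = m + n α
    have hαint : IsIntegral ℤ α := by
      refine ⟨Polynomial.X ^ 2 - Polynomial.C a, Polynomial.monic_X_pow_sub_C a two_ne_zero, ?_⟩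
      simp only [Polynomial.eval₂_sub, Polynomial.eval₂_pow, Polynomial.eval₂_X,
        Polynomial.eval₂_C, hα]
      simp
    have hint : IsIntegral ℤ (algebraMap ℚ K (m : ℚ) + algebraMap ℚ K (n : ℚ) * α) := by
      apply IsIntegral.add
      · rw [show algebraMap ℚ K ((m : ℤ) : ℚ) = algebraMap ℤ K m by
          rw [map_intCast]; exact (map_intCast (algebraMap ℤ K) m).symm]
        exact isIntegral_algebraMap
      · apply IsIntegral.mul _ hαint
        rw [show algebraMap ℚ K ((n : ℤ) : ℚ) = algebraMap ℤ K n by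
          rw [map_intCast]; exact (map_intCast (algebraMap ℤ K) n).symm]
        exact isIntegral_algebraMap
    set γ : 𝓞 K := ⟨_, hint⟩ with hγdef
    have hγK : (γ : K) = algebraMap ℚ K (m : ℚ) + algebraMap ℚ K (n : ℚ) * α := rfl
    have hγnormQ : Algebra.norm ℚ ((γ : K)) = ((D ^ 2 * NZ : ℤ) : ℚ) := by
      rw [hγK, norm_formula a hK α hα b hb0 hb1]
      push_cast
      rw [hm, hn]
      push_cast
      linear_combination ((D : ℚ)) ^ 2 * huv
    have hγnorm : Algebra.norm ℤ γ = D ^ 2 * NZ := by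
      have := Algebra.coe_norm_int (K := K) γ
      rw [hγnormQ] at this
      exact_mod_cast this
    have hD2NZpos : 0 < D ^ 2 * NZ := by
      apply mul_pos (by positivity)
      rw [hNZNn]
      exact_mod_cast Nat.pos_of_ne_zero hNn0
    have hγne : γ ≠ 0 := by
      intro h0
      rw [h0, Algebra.norm_zero] at hγnorm
      omega
    have hJne : Ideal.span {γ} ≠ ⊥ := by
      simpa [Ideal.span_singleton_eq_bot] using hγne
    have hJnorm : Ideal.absNorm (Ideal.span {γ}) = D.natAbs ^ 2 * Nn := by
      rw [Ideal.absNorm_span_singleton, hγnorm, hNZNn]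
      rw [Int.natAbs_mul, Int.natAbs_pow]
      simp
    have hJcls : icls K (Ideal.span {γ}) hJne = 1 :=
      (icls_eq_one_iff K _ hJne).mpr ⟨γ, by omega, rfl⟩
    -- the ideal I₀
    have hSex : ∀ q ∈ S, ∃ P : Ideal (𝓞 K), P.IsPrime ∧ P ≠ ⊥ ∧ Ideal.absNorm P = q :=
      fun q hq => split_ideal K hK (hS q hq).1 (hS q hq).2
    choose F hF1 hF2 hF3 using hSex
    set SP : Ideal (𝓞 K) := ∏ q ∈ S.attach, F q.1 q.2 with hSPdef
    have hSPnorm : Ideal.absNorm SP = ∏ q ∈ S, q := by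
      rw [hSPdef, map_prod Ideal.absNorm]
      rw [← Finset.prod_attach S (fun q => q)]
      exact Finset.prod_congr rfl fun q _ => hF3 q.1 q.2
    -- conjugate ideals
    have hsplit' : ∀ j, ∃ Q : Ideal (𝓞 K), Q.IsPrime ∧ Q ≠ (𝔭 j : Ideal (𝓞 K)) ∧
        Ideal.span {((p j : ℤ) : 𝓞 K)} = (𝔭 j : Ideal (𝓞 K)) * Q := fun j => (hsplit j).2
    choose 𝔮 h𝔮P h𝔮ne h𝔮span using hsplit'
    have hspan_nat : ∀ j, Ideal.span {((p j : ℕ) : 𝓞 K)} =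
        (𝔭 j : Ideal (𝓞 K)) * 𝔮 j := by
      intro j
      rw [← h𝔮span j, natAbs_cast_OK]
    have hnorms : ∀ j, Ideal.absNorm (𝔭 j : Ideal (𝓞 K)) = p j ∧
        Ideal.absNorm (𝔮 j) = p j ∧ (𝔭 j : Ideal (𝓞 K)) ≠ ⊥ ∧ 𝔮 j ≠ ⊥ :=
      fun j => split_norms K hK (hpprime j) (hsplit j).1 (h𝔮P j) (hspan_nat j)
    set PP : Ideal (𝓞 K) := ∏ j, (𝔭 j : Ideal (𝓞 K)) with hPPdef
    have hPPnorm : Ideal.absNorm PP = ∏ j, p j := by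
      rw [hPPdef, map_prod Ideal.absNorm]
      exact Finset.prod_congr rfl fun j _ => (hnorms j).1
    set I₀ : Ideal (𝓞 K) := PP * SP with hI₀def
    have hI₀norm : Ideal.absNorm I₀ = Nn := by
      rw [hI₀def, absNorm_mul' K, hPPnorm, hSPnorm, hNndef]
    have hI₀ne : I₀ ≠ ⊥ := by
      intro hb
      rw [hb, Ideal.absNorm_bot] at hI₀norm
      exact hNn0 hI₀norm.symm
    -- its class is a square
    have hIJne : I₀ * Ideal.span {γ} ≠ ⊥ := mul_ne_zero hI₀ne hJne
    have hIJnorm : Ideal.absNorm (I₀ * Ideal.span {γ}) = (D.natAbs * Nn) ^ 2 := by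
      rw [absNorm_mul' K, hI₀norm, hJnorm]
      ring
    obtain ⟨s, hs⟩ := sq_class K hK (Ideal.absNorm (I₀ * Ideal.span {γ}))
      (I₀ * Ideal.span {γ}) hIJne rfl ⟨D.natAbs * Nn, hIJnorm⟩
    have hIcls : icls K I₀ hI₀ne = s ^ 2 := by
      rw [← hs, icls_mul K I₀ (Ideal.span {γ}) hI₀ne hJne hIJne, hJcls]
      exact (mul_one (icls K I₀ hI₀ne)).symm
    -- produce an ideal of norm Nn which is narrowly principal
    have main : ∃ I₁ : Ideal (𝓞 K), ∃ hI₁ne : I₁ ≠ ⊥, Ideal.absNorm I₁ = Nn ∧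
        icls K I₁ hI₁ne = 1 := by
      by_cases hone : icls K I₀ hI₀ne = 1
      · exact ⟨I₀, hI₀ne, hI₀norm, hone⟩
      · have hsne : s ≠ 1 := by
          rintro rfl
          rw [one_pow] at hIcls
          exact hone hIcls
        obtain ⟨k, hk⟩ := (hcl s).mp hsne
        -- decompose I₀
        set R : Ideal (𝓞 K) := (∏ j ∈ Finset.univ.erase k, (𝔭 j : Ideal (𝓞 K))) * SP
          with hRdef
        have hprodsplit : (∏ j, (𝔭 j : Ideal (𝓞 K))) =
            (𝔭 k : Ideal (𝓞 K)) * ∏ j ∈ Finset.univ.erase k, (𝔭 j : Ideal (𝓞 K)) :=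
          (Finset.mul_prod_erase Finset.univ (fun j => (𝔭 j : Ideal (𝓞 K)))
            (Finset.mem_univ k)).symm
        have hI₀fac : I₀ = (𝔭 k : Ideal (𝓞 K)) * R := by
          rw [hI₀def, hPPdef, hRdef, ← mul_assoc, hprodsplit]
        have hRne : R ≠ ⊥ := by
          intro hb
          rw [hb, Ideal.mul_bot] at hI₀fac
          exact hI₀ne hI₀fac
        have h𝔭ne : (𝔭 k : Ideal (𝓞 K)) ≠ ⊥ := (hnorms k).2.2.1
        have h𝔮kne : 𝔮 k ≠ ⊥ := (hnorms k).2.2.2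
        set I₁ : Ideal (𝓞 K) := 𝔮 k * R with hI₁def
        have hI₁ne : I₁ ≠ ⊥ := mul_ne_zero h𝔮kne hRne
        have hI₁norm : Ideal.absNorm I₁ = Nn := by
          have h0 : Ideal.absNorm I₀ = p k * Ideal.absNorm R := by
            rw [hI₀fac, absNorm_mul' K, (hnorms k).1]
          rw [hI₁def, absNorm_mul' K, (hnorms k).2.1, ← h0, hI₀norm]
        refine ⟨I₁, hI₁ne, hI₁norm, ?_⟩
        -- class computation
        have hspanne : Ideal.span {((p k : ℕ) : 𝓞 K)} ≠ ⊥ := by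
          simpa [Ideal.span_singleton_eq_bot] using
            (Nat.cast_ne_zero (R := 𝓞 K)).mpr (hpprime k).ne_zero
        have hPQprod : (𝔭 k : Ideal (𝓞 K)) * 𝔮 k ≠ ⊥ := by
          rw [← hspan_nat k]; exact hspanne
        have epq : icls K ((𝔭 k : Ideal (𝓞 K)) * 𝔮 k) hPQprod = 1 := by
          rw [icls_congr K _ _ hPQprod hspanne (hspan_nat k).symm]
          exact icls_span_natCast K hK (p k) (hpprime k).pos hspanne
        have epq' : icls K (𝔭 k : Ideal (𝓞 K)) h𝔭ne * icls K (𝔮 k) h𝔮kne = 1 := by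
          rw [← icls_mul K _ _ h𝔭ne h𝔮kne hPQprod]
          exact epq
        have e0 : icls K (𝔭 k : Ideal (𝓞 K)) h𝔭ne * icls K R hRne = s ^ 2 := by
          rw [← icls_mul K _ _ h𝔭ne hRne (hI₀fac ▸ hI₀ne),
            ← icls_congr K I₀ _ hI₀ne (hI₀fac ▸ hI₀ne) hI₀fac]
          exact hIcls
        have e1 : icls K I₁ hI₁ne = icls K (𝔮 k) h𝔮kne * icls K R hRne :=
          icls_mul K _ _ h𝔮kne hRne hI₁ne
        have hks : icls K (𝔭 k : Ideal (𝓞 K)) h𝔭ne = s := by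
          rw [icls_val K (𝔭 k) h𝔭ne]
          exact hk
        have hQinv : icls K (𝔮 k) h𝔮kne = s⁻¹ := by
          rw [hks] at epq'
          exact eq_inv_of_mul_eq_one_right epq'
        have hRval : icls K R hRne = s⁻¹ * s ^ 2 := by
          rw [hks] at e0
          exact eq_inv_mul_of_mul_eq e0
        rw [e1, hQinv, hRval]
        group
    obtain ⟨I₁, hI₁ne, hI₁norm, hI₁cls⟩ := main
    obtain ⟨γ₁, hγ₁pos, hγ₁span⟩ := (icls_eq_one_iff K I₁ hI₁ne).mp hI₁cls
    have hγ₁norm : Algebra.norm ℤ γ₁ = NZ := by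
      have h1 : (Algebra.norm ℤ γ₁).natAbs = Nn := by
        rw [← Ideal.absNorm_span_singleton, hγ₁span, hI₁norm]
      rw [hNZNn]
      omega
    exact int_coords a ha hK α hα b hb0 hb1 γ₁ NZ hγ₁norm
end

section
/- Let a be a squarefree integer with a ≡ 2 or 3 (mod 4), K = Q(√a), and let J, J' be conjugate ideals of O_K with J·J' = (k)² for some non-zero integer k. Suppose every prime ideal dividing both J and J' is ramified over Q. Then J = 𝔨² for some ideal 𝔨 of O_K; in particular the class of J in the narrow class group of K is a square. -/
noncomputable section
open Polynomial

theorem zsq_nonsquare {a : ℤ} (ha : Squarefree a) (ha4 : a % 4 = 2 ∨ a % 4 = 3) :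
    ∀ n : ℤ, a ≠ n * n := by
  rintro n rfl
  have : IsUnit n := ha n (dvd_refl _)
  rcases Int.isUnit_iff.mp this with rfl | rfl <;> omega

theorem zsq_isDomain {a : ℤ} (ns : ∀ n : ℤ, a ≠ n * n) : IsDomain (ℤ√a) := by
  have : NoZeroDivisors (ℤ√a) := by
    constructor
    intro x y h
    have hn : x.norm * y.norm = 0 := by rw [← Zsqrtd.norm_mul, h, Zsqrtd.norm_zero]
    rcases mul_eq_zero.mp hn with h' | h'
    · exact Or.inl ((Zsqrtd.norm_eq_zero ns x).mp h')
    · exact Or.inr ((Zsqrtd.norm_eq_zero ns y).mp h')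
  exact NoZeroDivisors.to_isDomain _

theorem zsq_isIntegral (a : ℤ) (z : ℤ√a) : IsIntegral ℤ z := by
  refine ⟨X^2 + (C (-(2*z.re) : ℤ) * X + C (z.norm)), ?_, ?_⟩
  · exact (Polynomial.monic_X_pow 2).add_of_left
      (lt_of_le_of_lt (Polynomial.degree_linear_le) (by norm_num))
  · simp only [Polynomial.eval₂_add, Polynomial.eval₂_mul, Polynomial.eval₂_pow,
      Polynomial.eval₂_X, Polynomial.eval₂_C]
    rw [Zsqrtd.norm_def]
    ext <;> simp [pow_two, Zsqrtd.re_mul, Zsqrtd.im_mul] <;> ring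

theorem sq_den {a : ℤ} (ha : Squarefree a) (t : ℚ) (h : ∃ z : ℤ, (a : ℚ) * t^2 = z) :
    ∃ n : ℤ, (n : ℚ) = t := by
  obtain ⟨z, hz⟩ := h
  refine ⟨t.num, ?_⟩
  have hd : (t.den : ℚ) ≠ 0 := by exact_mod_cast t.den_nz  -- fix name later
  have key : a * t.num^2 = z * (t.den:ℤ)^2 := by
    have := hz
    rw [← Rat.num_div_den t] at this
    field_simp at this
    rw [mul_comm z]
    exact_mod_cast this
  have hdvd : ((t.den : ℤ))^2 ∣ a * t.num^2 := ⟨z, by linarith [key]⟩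
  have hcop : IsCoprime (t.num) (t.den : ℤ) := by
    rw [Int.isCoprime_iff_gcd_eq_one]
    exact t.reduced
  have hdvd' : ((t.den : ℤ))^2 ∣ a := (hcop.symm.pow (n := 2) (m := 2)).dvd_of_dvd_mul_right hdvd
  have : IsUnit ((t.den : ℤ)) := ha _ (by rwa [← pow_two])
  have hden : t.den = 1 := by
    rcases Int.isUnit_iff.mp this with h1 | h1 <;> omega
  rw [← Rat.den_eq_one_iff]; exact hden

theorem zmod4_lemma : ∀ A x y : ZMod 4, (A = 2 ∨ A = 3) → x^2 = A * y^2 →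
    (x = 0 ∨ x = 2) ∧ (y = 0 ∨ y = 2) := by decide

theorem int_cast_zmod4_cases {P : ℤ} (h : (P : ZMod 4) = 0 ∨ (P : ZMod 4) = 2) : 2 ∣ P := by
  rcases h with h | h
  · have := (ZMod.intCast_zmod_eq_zero_iff_dvd P 4).mp h
    omega
  · have : ((P - 2 : ℤ) : ZMod 4) = 0 := by push_cast [h]; ring
    have := (ZMod.intCast_zmod_eq_zero_iff_dvd (P-2) 4).mp this
    omega

theorem core_arith {a : ℤ} (ha : Squarefree a) (ha4 : a % 4 = 2 ∨ a % 4 = 3)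
    (p q : ℚ) (h1 : ∃ P : ℤ, (P : ℚ) = 2 * p) (h2 : ∃ m : ℤ, (m : ℚ) = p^2 - a * q^2) :
    (∃ p' : ℤ, (p' : ℚ) = p) ∧ (∃ q' : ℤ, (q' : ℚ) = q) := by
  obtain ⟨P, hP⟩ := h1
  obtain ⟨m, hm⟩ := h2
  have hq2 : (a : ℚ) * (2*q)^2 = ((P^2 - 4*m : ℤ) : ℚ) := by push_cast; rw [hP, hm]; ring
  obtain ⟨Q, hQ⟩ := sq_den ha (2*q) ⟨_, hq2⟩
  have hrel : P^2 - a * Q^2 = 4 * m := by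
    have : ((P^2 - a*Q^2 : ℤ) : ℚ) = ((4*m : ℤ) : ℚ) := by push_cast [hP, hQ] at *; nlinarith [hP, hQ, hm]
    exact_mod_cast this
  have hz : ((P : ZMod 4))^2 = ((a : ZMod 4)) * (Q : ZMod 4)^2 := by
    have h0 : ((P : ZMod 4))^2 - ((a : ZMod 4)) * (Q : ZMod 4)^2 = 0 := by
      calc ((P : ZMod 4))^2 - ((a : ZMod 4)) * (Q : ZMod 4)^2
          = ((P^2 - a*Q^2 : ℤ) : ZMod 4) := by push_cast; ring
        _ = ((4*m : ℤ) : ZMod 4) := by rw [hrel]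
        _ = 0 := by push_cast; rw [show (4 : ZMod 4) = 0 by decide]; ring
    linear_combination h0
  have hA : ((a : ZMod 4) = 2 ∨ (a : ZMod 4) = 3) := by
    rcases ha4 with h | h
    · left
      have : ((a - 2 : ℤ) : ZMod 4) = 0 := (ZMod.intCast_zmod_eq_zero_iff_dvd _ 4).mpr (by omega)
      push_cast at this; linear_combination this
    · right
      have : ((a - 3 : ℤ) : ZMod 4) = 0 := (ZMod.intCast_zmod_eq_zero_iff_dvd _ 4).mpr (by omega)
      push_cast at this; linear_combination this
  obtain ⟨hx, hy⟩ := zmod4_lemma _ _ _ hA hz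
  obtain ⟨P', rfl⟩ := int_cast_zmod4_cases hx
  obtain ⟨Q', rfl⟩ := int_cast_zmod4_cases hy
  constructor
  · exact ⟨P', by push_cast at hP ⊢; linarith⟩
  · exact ⟨Q', by push_cast at hQ ⊢; linarith⟩

open Polynomial
open scoped nonZeroDivisors


theorem isIntegral_int_map {A B : Type*} [CommRing A] [CommRing B] [Algebra ℤ A] [Algebra ℤ B] (f : A →+* B) {x : A}
    (h : IsIntegral ℤ x) : IsIntegral ℤ (f x) := by
  obtain ⟨p, hm, he⟩ := h
  refine ⟨p, hm, ?_⟩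
  have hc : f.comp (algebraMap ℤ A) = algebraMap ℤ B := Subsingleton.elim _ _
  calc p.eval₂ (algebraMap ℤ B) (f x) = p.eval₂ (f.comp (algebraMap ℤ A)) (f x) := by rw [hc]
    _ = f (p.eval₂ (algebraMap ℤ A) x) := (Polynomial.hom_eval₂ _ _ _ _).symm
    _ = 0 := by rw [he, map_zero]

theorem rat_descent {L : Type*} [Field L] [Algebra ℚ L] [Algebra ℤ L] {r : ℚ}
    (h : IsIntegral ℤ (algebraMap ℚ L r)) : ∃ n : ℤ, (n : ℚ) = r := by
  obtain ⟨p, hm, he⟩ := h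
  have hc : (algebraMap ℚ L).comp (algebraMap ℤ ℚ) = algebraMap ℤ L := Subsingleton.elim _ _
  have he' : algebraMap ℚ L (p.eval₂ (algebraMap ℤ ℚ) r) = 0 := by
    rw [Polynomial.hom_eval₂, hc, he]
  have h0 : p.eval₂ (algebraMap ℤ ℚ) r = 0 := by
    exact (map_eq_zero_iff _ (algebraMap ℚ L).injective).mp he'
  have : IsIntegral ℤ r := ⟨p, hm, h0⟩
  obtain ⟨n, hn⟩ := IsIntegrallyClosed.isIntegral_iff.mp this
  exact ⟨n, hn⟩

section main
variable {a : ℤ} [IsDomain (ℤ√a)]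

local notation "L" => FractionRing (ℤ√a)
local notation "φ" => algebraMap (ℤ√a) (FractionRing (ℤ√a))

theorem zsq_repr (ns : ∀ n : ℤ, a ≠ n * n) (x : L) :
    ∃ (u : ℤ√a) (N : ℤ), N ≠ 0 ∧ x = φ u * ((N : L))⁻¹ := by
  obtain ⟨z, w, hw, hx⟩ := IsFractionRing.div_surjective (A := ℤ√a) x
  have hw0 : w ≠ 0 := nonZeroDivisors.ne_zero hw
  refine ⟨z * star w, w.norm, fun h => hw0 ((Zsqrtd.norm_eq_zero ns w).mp h), ?_⟩
  have hsw : φ (star w) ≠ 0 := fun h => hw0 (by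
    have := (map_eq_zero_iff _ (IsFractionRing.injective (ℤ√a) L)).mp h
    simpa using congrArg star this)
  have hww : φ w ≠ 0 := fun h => hw0 ((map_eq_zero_iff _ (IsFractionRing.injective (ℤ√a) L)).mp h)
  have hN : ((w.norm : ℤ) : L) = φ w * φ (star w) := by
    rw [← map_mul, ← Zsqrtd.norm_eq_mul_conj, ← map_intCast φ]
  rw [← hx, hN, map_mul]
  field_simp

/-- The conjugation automorphism on the fraction field. -/
def conjL : L ≃+* L :=
  IsLocalization.ringEquivOfRingEquiv (M := (ℤ√a)⁰) L L (starRingAut (R := ℤ√a)) (by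
    ext x
    simp only [Submonoid.mem_map]
    constructor
    · rintro ⟨y, hy, rfl⟩
      exact mem_nonZeroDivisors_iff_ne_zero.mpr
        (by simpa using mem_nonZeroDivisors_iff_ne_zero.mp hy)
    · intro hx
      refine ⟨star x, mem_nonZeroDivisors_iff_ne_zero.mpr ?_, by simp⟩
      simpa using mem_nonZeroDivisors_iff_ne_zero.mp hx)

theorem conjL_apply (z : ℤ√a) : conjL (φ z) = φ (star z) := by
  unfold conjL
  exact IsLocalization.ringEquivOfRingEquiv_eq _ _

theorem zsq_isIntegralClosure (ha : Squarefree a) (ha4 : a % 4 = 2 ∨ a % 4 = 3) :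
    IsIntegralClosure (ℤ√a) ℤ L := by
  have ns := zsq_nonsquare ha ha4
  constructor
  · exact IsFractionRing.injective (ℤ√a) L
  · intro x
    constructor
    · -- hard direction
      intro hx
      obtain ⟨u, N, hN, hxu⟩ := zsq_repr ns x
      set ψ := algebraMap ℚ L with hψ
      set p : ℚ := (u.re : ℚ) / (N : ℚ) with hp
      set q : ℚ := (u.im : ℚ) / (N : ℚ) with hq
      set s : L := φ Zsqrtd.sqrtd with hs
      have hcast : ∀ n : ℤ, ψ ((n : ℚ)) = φ ((n : ℤ√a)) := fun n => by
        rw [map_intCast, map_intCast]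
      have hxps : x = ψ p + ψ q * s := by
        have hu : φ u = ψ (u.re : ℚ) + ψ (u.im : ℚ) * s := by
          rw [hcast, hcast, hs, ← map_mul, ← map_add]
          congr 1
          ext <;> simp
        rw [hxu, hu, hp, hq, map_div₀, map_div₀]
        have : ((N : L)) = ψ ((N:ℚ)) := by rw [hcast]; rw [map_intCast]
        rw [this]
        field_simp
      have hEx : conjL x = ψ p - ψ q * s := by
        have hu' : φ (star u) = ψ (u.re : ℚ) - ψ (u.im : ℚ) * s := by
          rw [hcast, hcast, hs, ← map_mul, ← map_sub]
          congr 1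
          ext <;> simp
        have : conjL x = φ (star u) * ((N : L))⁻¹ := by
          rw [hxu, map_mul, conjL_apply, map_inv₀]
          congr 1
          rw [show ((N:L)) = φ ((N : ℤ√a)) by rw [map_intCast], conjL_apply]
          simp
        rw [this, hu', hp, hq, map_div₀, map_div₀]
        have : ((N : L)) = ψ ((N:ℚ)) := by rw [hcast]; rw [map_intCast]
        rw [this]
        field_simp
      have hss : s * s = ψ ((a : ℚ)) := by
        rw [hs, ← map_mul, Zsqrtd.dmuld, hcast]
      have hExInt : IsIntegral ℤ (conjL x) := by simpa using isIntegral_int_map (conjL (a := a)).toRingHom hx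
      have ht1 : IsIntegral ℤ (ψ (2 * p)) := by
        have : ψ (2 * p) = x + conjL x := by rw [hEx, hxps, map_mul, map_ofNat]; ring
        rw [this]; exact hx.add hExInt
      have ht2 : IsIntegral ℤ (ψ (p^2 - a * q^2)) := by
        have : ψ (p^2 - a*q^2) = x * conjL x := by
          rw [hEx, hxps, map_sub, map_mul, map_pow, map_pow]
          have expand : (ψ p + ψ q * s) * (ψ p - ψ q * s) = ψ p ^2 - ψ q ^2 * (s * s) := by ring
          rw [expand, hss]; ring
        rw [this]; exact hx.mul hExInt
      obtain ⟨⟨p', hp'⟩, ⟨q', hq'⟩⟩ := core_arith ha ha4 p q (rat_descent ht1) (rat_descent ht2)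
      refine ⟨⟨p', q'⟩, ?_⟩
      rw [hxps, ← hp', ← hq', hcast, hcast, hs, ← map_mul, ← map_add]
      congr 1
      ext <;> simp
    · rintro ⟨y, rfl⟩
      exact isIntegral_int_map (φ : ℤ√a →+* L) (zsq_isIntegral a y)

end main

section dedekind
variable {a : ℤ} [IsDomain (ℤ√a)]
local notation "L" => FractionRing (ℤ√a)
local notation "φ" => algebraMap (ℤ√a) (FractionRing (ℤ√a))

theorem zsq_finiteDimensional (ns : ∀ n : ℤ, a ≠ n * n) :
    letI : Algebra (FractionRing ℤ) L := FractionRing.liftAlgebra ℤ _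
    FiniteDimensional (FractionRing ℤ) L := by
  letI : Algebra (FractionRing ℤ) L := FractionRing.liftAlgebra ℤ _
  haveI := FractionRing.isScalarTower_liftAlgebra ℤ (L)
  rw [FiniteDimensional, Module.finite_def, Submodule.fg_def]
  refine ⟨{1, φ Zsqrtd.sqrtd}, Set.toFinite _, ?_⟩
  rw [eq_top_iff]
  rintro x -
  obtain ⟨u, N, hN, hxu⟩ := zsq_repr ns x
  set K := FractionRing ℤ
  set κ := algebraMap K (FractionRing (ℤ√a)) with hκ
  have hcast : ∀ n : ℤ, κ (algebraMap ℤ K n) = φ ((n : ℤ√a)) := fun n => by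
    rw [← IsScalarTower.algebraMap_apply, map_intCast, eq_intCast]
  have hNK : algebraMap ℤ K N ≠ 0 := fun h => hN ((map_eq_zero_iff _ (IsFractionRing.injective ℤ K)).mp h)
  set c1 : K := algebraMap ℤ K u.re / algebraMap ℤ K N
  set c2 : K := algebraMap ℤ K u.im / algebraMap ℤ K N
  have hx : x = c1 • (1 : FractionRing (ℤ√a)) + c2 • (φ Zsqrtd.sqrtd) := by
    rw [Algebra.smul_def, Algebra.smul_def, ← hκ, map_div₀, map_div₀, hcast, hcast, hcast]
    have hu : φ u = φ ((u.re : ℤ√a)) + φ ((u.im : ℤ√a)) * φ Zsqrtd.sqrtd := by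
      rw [← map_mul, ← map_add]
      congr 1
      ext <;> simp
    have hNL : φ ((N : ℤ√a)) ≠ 0 :=
      fun h => hN (by simpa using (map_eq_zero_iff _ (IsFractionRing.injective (ℤ√a) (L))).mp h)
    rw [hxu, hu]
    rw [show ((N : ℤ) : L) = φ ((N:ℤ√a)) by rw [map_intCast]]
    field_simp
  rw [hx]
  exact add_mem (Submodule.smul_mem _ _ (Submodule.subset_span (by simp)))
    (Submodule.smul_mem _ _ (Submodule.subset_span (by simp)))

end dedekind

theorem zsq_isDedekind {a : ℤ} (ha : Squarefree a) (ha4 : a % 4 = 2 ∨ a % 4 = 3) :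
    IsDomain (ℤ√a) ∧ IsDedekindDomain (ℤ√a) := by
  have ns := zsq_nonsquare ha ha4
  haveI : IsDomain (ℤ√a) := zsq_isDomain ns
  letI : Algebra (FractionRing ℤ) (FractionRing (ℤ√a)) := FractionRing.liftAlgebra ℤ _
  haveI := FractionRing.isScalarTower_liftAlgebra ℤ (FractionRing (ℤ√a))
  haveI : IsIntegralClosure (ℤ√a) ℤ (FractionRing (ℤ√a)) := zsq_isIntegralClosure ha ha4
  haveI : FiniteDimensional (FractionRing ℤ) (FractionRing (ℤ√a)) := zsq_finiteDimensional ns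
  exact ⟨inferInstance, IsIntegralClosure.isDedekindDomain ℤ (FractionRing ℤ) (FractionRing (ℤ√a)) (ℤ√a)⟩

open scoped nonZeroDivisors
open UniqueFactorizationMonoid


theorem stmt_19 (a : ℤ) (ha : Squarefree a) (ha4 : a % 4 = 2 ∨ a % 4 = 3)
    (k : ℤ) (hk : k ≠ 0)
    (J : Ideal (ℤ√a))
    (hJJ' : J * J.map (starRingEnd (ℤ√a)) = Ideal.span {(k : ℤ√a)} ^ 2)
    (hram : ∀ q : Ideal (ℤ√a), q.IsPrime → q ∣ J → q ∣ J.map (starRingEnd (ℤ√a)) →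
      ∃ p : ℕ, p.Prime ∧ q ^ 2 = Ideal.span {((p : ℤ) : ℤ√a)}) :
    ∃ 𝔨 : Ideal (ℤ√a), J = 𝔨 ^ 2 := by
  classical
  obtain ⟨hdom, hded⟩ := zsq_isDedekind ha ha4
  set σ := starRingEnd (ℤ√a) with hσ
  have hσinj : Function.Injective σ := star_injective
  have hmapinv : ∀ I : Ideal (ℤ√a), (I.map σ).map σ = I := by
    intro I
    rw [Ideal.map_map]
    have : (σ.comp σ) = RingHom.id (ℤ√a) := RingHom.ext fun z => star_star z
    rw [this, Ideal.map_id]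
  have hmapdvd : ∀ I I' : Ideal (ℤ√a), I ∣ I' → I.map σ ∣ I'.map σ := by
    rintro I I' ⟨K, rfl⟩
    exact ⟨K.map σ, Ideal.map_mul σ I K⟩
  set J' := J.map σ with hJ'def
  -- nonzero facts
  have hkcast : ((k : ℤ√a)) ≠ 0 := by
    intro h
    exact hk (by exact_mod_cast h)
  have hkspan : Ideal.span {(k : ℤ√a)} ≠ 0 := by
    rw [Ne, Ideal.zero_eq_bot, Ideal.span_singleton_eq_bot]
    exact hkcast
  have hJ0 : J ≠ 0 := by
    intro h
    rw [h, zero_mul] at hJJ'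
    exact pow_ne_zero 2 hkspan hJJ'.symm
  have hJ'0 : J' ≠ 0 := by
    intro h
    exact hJ0 ((Ideal.map_eq_bot_iff_of_injective hσinj).mp h)
  -- reduce to parity of multiplicities
  suffices hcnt : ∀ P ∈ normalizedFactors J, 2 ∣ Multiset.count P (normalizedFactors J) by
    obtain ⟨t, ht⟩ := Multiset.exists_smul_of_dvd_count _ hcnt
    refine ⟨t.prod, ?_⟩
    have h1 : (normalizedFactors J).prod = J := associated_iff_eq.mp (prod_normalizedFactors hJ0)
    rw [← h1, ht, Multiset.prod_nsmul]
  intro P hP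
  have hPirr : Irreducible P := irreducible_of_normalized_factor P hP
  have hPprime : Prime P := prime_of_normalized_factor P hP
  have hPnorm : normalize P = P := normalize_normalized_factor P hP
  have hPdvdJ : P ∣ J := dvd_of_mem_normalizedFactors hP
  have hcount : Multiset.count P (normalizedFactors J) + Multiset.count P (normalizedFactors J')
      = 2 * Multiset.count P (normalizedFactors (Ideal.span {(k : ℤ√a)})) := by
    have h2 : normalizedFactors (J * J') = normalizedFactors J + normalizedFactors J' :=
      normalizedFactors_mul hJ0 hJ'0
    have h3 : normalizedFactors (Ideal.span {(k : ℤ√a)} ^ 2)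
        = 2 • normalizedFactors (Ideal.span {(k : ℤ√a)}) := normalizedFactors_pow 2
    rw [← Multiset.count_add, ← h2, hJJ', h3, Multiset.count_nsmul]
  by_cases hPJ' : P ∣ J'
  · -- ramified case
    obtain ⟨p, hp, hq⟩ := hram P (Ideal.isPrime_of_prime hPprime) hPdvdJ hPJ'
    -- σ fixes P
    have hmapP : P.map σ = P := by
      have h1 : (P.map σ) ^ 2 = P ^ 2 := by
        rw [← Ideal.map_pow, hq, Ideal.map_span]
        congr 1
        simp [hσ]
      have hPmapne : P.map σ ≠ ⊥ := by
        rw [Ne, Ideal.map_eq_bot_iff_of_injective hσinj]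
        exact hPprime.ne_zero
      haveI : P.IsPrime := Ideal.isPrime_of_prime hPprime
      have hPmapprime : Prime (P.map σ) := by
        have : (P.map σ).IsPrime := by
          have := Ideal.map_isPrime_of_equiv (starRingAut (R := ℤ√a)) (I := P)
          convert this using 2
          all_goals rfl
        exact Ideal.prime_of_isPrime hPmapne this
      have d1 : P.map σ ∣ P := by
        refine hPmapprime.dvd_of_dvd_pow (n := 2) ?_
        rw [← h1]
        exact dvd_pow_self _ (by norm_num)
      have d2 : P ∣ P.map σ := by
        refine hPprime.dvd_of_dvd_pow (n := 2) ?_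
        rw [h1]
        exact dvd_pow_self _ (by norm_num)
      exact associated_iff_eq.mp (associated_of_dvd_dvd d1 d2)
    -- counts of J and J' agree at P
    have hcJ' : Multiset.count P (normalizedFactors J') = Multiset.count P (normalizedFactors J) := by
      have he : emultiplicity P J' = emultiplicity P J := by
        rw [emultiplicity_eq_emultiplicity_iff]
        intro n
        constructor
        · intro h
          have := hmapdvd _ _ h
          rwa [hmapinv, Ideal.map_pow, hmapP] at this
        · intro h
          have := hmapdvd _ _ h
          rwa [Ideal.map_pow, hmapP] at this
      rw [emultiplicity_eq_count_normalizedFactors hPirr hJ'0,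
        emultiplicity_eq_count_normalizedFactors hPirr hJ0, hPnorm] at he
      exact_mod_cast he
    -- count of span k at P is even
    have hspank : 2 ∣ Multiset.count P (normalizedFactors (Ideal.span {(k : ℤ√a)})) := by
      set n : ℕ := k.natAbs with hn
      have hn0 : n ≠ 0 := Int.natAbs_ne_zero.mpr hk
      set m : ℕ := n.factorization p with hm
      set r : ℕ := n / p ^ m with hr
      have hnr : p ^ m * r = n := Nat.ordProj_mul_ordCompl_eq_self n p
      have hpr : ¬ (p ∣ r) := Nat.not_dvd_ordCompl hp hn0
      have hr0 : r ≠ 0 := by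
        intro h
        rw [h, mul_zero] at hnr
        exact hn0 hnr.symm
      have hassoc : Associated ((k : ℤ√a)) ((n : ℤ√a)) := by
        have h0 := (Int.associated_natAbs k).map (Int.castRingHom (ℤ√a)).toMonoidHom
        simp only [RingHom.toMonoidHom_eq_coe, MonoidHom.coe_coe, Int.coe_castRingHom] at h0
        have hcast2 : ((n : ℤ√a)) = (((k.natAbs : ℤ)) : ℤ√a) := by rw [hn]; exact (Int.cast_natCast _).symm
        rw [hcast2]
        exact h0
      have hspan_eq : Ideal.span {(k : ℤ√a)} = Ideal.span {((n : ℤ√a))} :=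
        Ideal.span_singleton_eq_span_singleton.mpr hassoc
      have hfact : Ideal.span {((n : ℤ√a))} = P ^ (2 * m) * Ideal.span {((r : ℤ√a))} := by
        have h1 : ((n : ℤ√a)) = ((p : ℤ√a)) ^ m * ((r : ℤ√a)) := by
          rw [← hnr]; push_cast; ring
        rw [h1, ← Ideal.span_singleton_mul_span_singleton, ← Ideal.span_singleton_pow]
        have h2 : Ideal.span {((p : ℤ√a))} = P ^ 2 := by
          rw [hq]; norm_cast
        rw [h2, ← pow_mul, mul_comm 2 m]
      have hPr : ¬ (P ∣ Ideal.span {((r : ℤ√a))}) := by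
        intro hPdvd
        have h2 : P ^ 2 ∣ Ideal.span {((r : ℤ√a))} * Ideal.span {((r : ℤ√a))} := by
          rw [pow_two]
          exact mul_dvd_mul hPdvd hPdvd
        rw [hq, Ideal.span_singleton_mul_span_singleton, Ideal.dvd_iff_le] at h2
        rw [Ideal.span_singleton_le_span_singleton] at h2
        have h3 : ((p : ℤ) : ℤ√a) ∣ ((r * r : ℤ) : ℤ√a) := by exact_mod_cast h2
        rw [Zsqrtd.intCast_dvd] at h3
        have h4 : (p : ℤ) ∣ ((r : ℤ) * (r : ℤ)) := by
          have := h3.1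
          simpa using this
        have h5 : (p : ℕ) ∣ r * r := by exact_mod_cast h4
        exact hpr (hp.dvd_of_dvd_pow (n := 2) (by rwa [pow_two]))
      have hrspan0 : Ideal.span {((r : ℤ√a))} ≠ 0 := by
        rw [Ne, Ideal.zero_eq_bot, Ideal.span_singleton_eq_bot]
        exact_mod_cast fun h => hr0 (by exact_mod_cast h)
      have hP2m0 : (P ^ (2 * m) : Ideal (ℤ√a)) ≠ 0 := pow_ne_zero _ hPprime.ne_zero
      rw [hspan_eq, hfact, normalizedFactors_mul hP2m0 hrspan0, Multiset.count_add,
        normalizedFactors_pow, Multiset.count_nsmul,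
        normalizedFactors_irreducible hPirr, hPnorm]
      have hcr : Multiset.count P (normalizedFactors (Ideal.span {((r : ℤ√a))})) = 0 := by
        rw [Multiset.count_eq_zero]
        intro hmem
        exact hPr (dvd_of_mem_normalizedFactors hmem)
      rw [hcr]
      simp
    omega
  · -- unramified case
    have hcJ'0 : Multiset.count P (normalizedFactors J') = 0 := by
      rw [Multiset.count_eq_zero]
      intro hmem
      exact hPJ' (dvd_of_mem_normalizedFactors hmem)
    omega
end
end
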